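/- arXiv:1602.00927 — 3 statements merged into one kernel-verified Lean document; each statement's English description precedes it below -/
import Mathlib

section
/- Let {P_n}_{n∈ℕ^d} and {Q_n}_{n∈ℕ^d} be families of positive finite Borel measures on 𝕋^d, and let P, Q be positive finite Borel measures on 𝕋^d. If P_n converges weakly to P and Q_n converges weakly to Q (i.e., ∫ f dP_n → ∫ f dP and ∫ f dQ_n → ∫ f dQ for every continuous f : 𝕋^d → ℝ, as n → ∞ in ℕ^d), then limsup_n ρ(P_n, Q_n) ≤ ρ(P, Q). -/
open MeasureTheory Filter
open scoped Topology ENNReal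

noncomputable section

/-- The `d`-torus `𝕋^d = {z ∈ ℂ^d : |z_j| = 1 for all j}`. -/
abbrev Torus (d : ℕ) := { z : Fin d → ℂ // ∀ j, ‖z j‖ = 1 }

/-- The affinity `ρ(P,Q) = ∫ (dP/dν)^{1/2} (dQ/dν)^{1/2} dν`, computed with the choice
`ν = P + Q` (the value does not depend on the choice of `ν` with `P ≪ ν` and `Q ≪ ν`). -/
def affinity {d : ℕ} (P Q : Measure (Torus d)) : ℝ :=
  ∫ z, Real.sqrt ((P.rnDeriv (P + Q) z).toReal) * Real.sqrt ((Q.rnDeriv (P + Q) z).toReal)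
    ∂(P + Q)

instance torusBorel {d : ℕ} : BorelSpace (Torus d) :=
  Subtype.borelSpace {z : Fin d → ℂ | ∀ j, ‖z j‖ = 1}

instance torusCompact {d : ℕ} : CompactSpace (Torus d) :=
  isCompact_iff_compactSpace.mp (by
    show IsCompact {z : Fin d → ℂ | ∀ j, ‖z j‖ = 1}
    have h : {z : Fin d → ℂ | ∀ j, ‖z j‖ = 1}
        = Set.univ.pi (fun _ => Metric.sphere (0:ℂ) 1) := by
      ext z
      simp [Set.mem_pi, mem_sphere_zero_iff_norm]
    rw [h]
    exact isCompact_univ_pi fun _ => isCompact_sphere 0 1)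

lemma my_sqrt_add (x y : ℝ) (hx : 0 ≤ x) (hy : 0 ≤ y) :
    Real.sqrt (x + y) ≤ Real.sqrt x + Real.sqrt y := by
  have h := Real.sqrt_le_sqrt (show x + y ≤ (Real.sqrt x + Real.sqrt y)^2 by
    nlinarith [Real.sq_sqrt hx, Real.sq_sqrt hy, Real.sqrt_nonneg x, Real.sqrt_nonneg y])
  rwa [Real.sqrt_sq (by positivity)] at h

lemma my_bdd_integrable {d : ℕ} (μ : Measure (Torus d)) [IsFiniteMeasure μ]
    {f : Torus d → ℝ} (hf : AEStronglyMeasurable f μ) {C : ℝ} (hC : ∀ z, ‖f z‖ ≤ C) :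
    Integrable f μ :=
  (integrable_const C).mono' hf (Eventually.of_forall hC)

lemma my_int_mul {d : ℕ} {μ : Measure (Torus d)} {p g : Torus d → ℝ}
    (hp : Integrable p μ) (hp0 : ∀ z, 0 ≤ p z) (hgm : AEStronglyMeasurable g μ)
    {C : ℝ} (hC : ∀ z, |g z| ≤ C) : Integrable (fun z => p z * g z) μ := by
  refine (hp.const_mul C).mono' (hp.aestronglyMeasurable.mul hgm)
    (Eventually.of_forall fun z => ?_)
  rw [Real.norm_eq_abs, abs_mul, abs_of_nonneg (hp0 z)]
  exact (mul_le_mul_of_nonneg_left (hC z) (hp0 z)).trans_eq (mul_comm _ _)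

lemma affinity_le_half {d : ℕ} (P Q : Measure (Torus d)) [IsFiniteMeasure P] [IsFiniteMeasure Q]
    {f : Torus d → ℝ} (hf : Continuous f) {a : ℝ} (ha : 0 < a) (hfa : ∀ z, a ≤ f z) :
    affinity P Q ≤ (∫ z, f z ∂P + ∫ z, (f z)⁻¹ ∂Q) / 2 := by
  obtain ⟨b, hb⟩ : ∃ b, ∀ z, f z ≤ b := by
    obtain ⟨b, hb⟩ := (isCompact_range hf).bddAbove
    exact ⟨b, fun z => hb ⟨z, rfl⟩⟩
  set ν : Measure (Torus d) := P + Q with hνdef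
  have hPle : P ≤ ν := by rw [hνdef]; exact Measure.le_add_right le_rfl
  have hQle : Q ≤ ν := by rw [hνdef]; exact Measure.le_add_left le_rfl
  have hPν : P ≪ ν := Measure.absolutelyContinuous_of_le hPle
  have hQν : Q ≪ ν := Measure.absolutelyContinuous_of_le hQle
  set p : Torus d → ℝ := fun z => (P.rnDeriv ν z).toReal with hpdef
  set q : Torus d → ℝ := fun z => (Q.rnDeriv ν z).toReal with hqdef
  have hpm : Measurable p := (Measure.measurable_rnDeriv P ν).ennreal_toReal
  have hqm : Measurable q := (Measure.measurable_rnDeriv Q ν).ennreal_toReal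
  have hp0 : ∀ z, 0 ≤ p z := fun z => ENNReal.toReal_nonneg
  have hq0 : ∀ z, 0 ≤ q z := fun z => ENNReal.toReal_nonneg
  have hip : Integrable p ν := Measure.integrable_toReal_rnDeriv
  have hiq : Integrable q ν := Measure.integrable_toReal_rnDeriv
  have hfz : ∀ z, 0 < f z := fun z => lt_of_lt_of_le ha (hfa z)
  have key : ∀ z, Real.sqrt (p z) * Real.sqrt (q z) ≤ (p z * f z + q z * (f z)⁻¹) / 2 := by
    intro z
    have h1 : Real.sqrt (p z * f z) ^ 2 = p z * f z :=
      Real.sq_sqrt (mul_nonneg (hp0 z) (hfz z).le)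
    have h2 : Real.sqrt (q z * (f z)⁻¹) ^ 2 = q z * (f z)⁻¹ :=
      Real.sq_sqrt (mul_nonneg (hq0 z) (inv_pos.mpr (hfz z)).le)
    have h3 : Real.sqrt (p z * f z) * Real.sqrt (q z * (f z)⁻¹)
        = Real.sqrt (p z) * Real.sqrt (q z) := by
      rw [← Real.sqrt_mul (mul_nonneg (hp0 z) (hfz z).le), ← Real.sqrt_mul (hp0 z)]
      congr 1
      field_simp [(hfz z).ne']
    have h4 := two_mul_le_add_sq (Real.sqrt (p z * f z)) (Real.sqrt (q z * (f z)⁻¹))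
    rw [h1, h2] at h4
    nlinarith [h3]
  have hisq : Integrable (fun z => Real.sqrt (p z) * Real.sqrt (q z)) ν := by
    refine ((hip.add hiq).div_const 2).mono'
      ((hpm.sqrt.mul hqm.sqrt).aestronglyMeasurable) (Eventually.of_forall fun z => ?_)
    have h4 := two_mul_le_add_sq (Real.sqrt (p z)) (Real.sqrt (q z))
    rw [Real.sq_sqrt (hp0 z), Real.sq_sqrt (hq0 z)] at h4
    have : 0 ≤ Real.sqrt (p z) * Real.sqrt (q z) := by positivity
    rw [Real.norm_eq_abs, abs_of_nonneg this]
    simp only [Pi.add_apply]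
    linarith
  have hipf : Integrable (fun z => p z * f z) ν :=
    my_int_mul hip hp0 hf.measurable.aestronglyMeasurable (C := |a| + |b|) (fun z => by
      rw [abs_of_pos (hfz z)]
      have := le_abs_self b
      have := abs_nonneg a
      linarith [hb z])
  have hiqf : Integrable (fun z => q z * (f z)⁻¹) ν :=
    my_int_mul hiq hq0 hf.measurable.inv.aestronglyMeasurable (C := a⁻¹) (fun z => by
      rw [abs_of_pos (inv_pos.mpr (hfz z))]
      exact inv_anti₀ ha (hfa z))
  have hmono : affinity P Q ≤ ∫ z, (p z * f z + q z * (f z)⁻¹) / 2 ∂ν :=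
    integral_mono hisq ((hipf.add hiqf).div_const 2) key
  have e1 : ∫ z, p z * f z ∂ν = ∫ z, f z ∂P := by
    haveI : P.HaveLebesgueDecomposition ν := by rw [hνdef]; exact Measure.haveLebesgueDecomposition_of_finiteMeasure
    have := integral_rnDeriv_smul (μ := P) (ν := ν) (f := f) hPν
    simpa [smul_eq_mul] using this
  have e2 : ∫ z, q z * (f z)⁻¹ ∂ν = ∫ z, (f z)⁻¹ ∂Q := by
    haveI : Q.HaveLebesgueDecomposition ν := by rw [hνdef]; exact Measure.haveLebesgueDecomposition_of_finiteMeasure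
    have := integral_rnDeriv_smul (μ := Q) (ν := ν) (f := fun z => (f z)⁻¹) hQν
    simpa [smul_eq_mul] using this
  calc affinity P Q ≤ ∫ z, (p z * f z + q z * (f z)⁻¹) / 2 ∂ν := hmono
    _ = (∫ z, p z * f z ∂ν + ∫ z, q z * (f z)⁻¹ ∂ν) / 2 := by
        rw [integral_div, integral_add hipf hiqf]
    _ = (∫ z, f z ∂P + ∫ z, (f z)⁻¹ ∂Q) / 2 := by rw [e1, e2]

lemma affinity_nonneg {d : ℕ} (P Q : Measure (Torus d)) : 0 ≤ affinity P Q :=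
  integral_nonneg fun z => mul_nonneg (Real.sqrt_nonneg _) (Real.sqrt_nonneg _)

set_option maxHeartbeats 1000000 in
lemma exists_good_fun {d : ℕ} (P Q : Measure (Torus d)) [IsFiniteMeasure P] [IsFiniteMeasure Q]
    {ε : ℝ} (hε : 0 < ε) :
    ∃ (f : Torus d → ℝ) (a : ℝ), Continuous f ∧ 0 < a ∧ (∀ z, a ≤ f z) ∧
      (∫ z, f z ∂P + ∫ z, (f z)⁻¹ ∂Q) / 2 ≤ affinity P Q + ε := by
  set ν : Measure (Torus d) := P + Q with hνdef
  have hPle : P ≤ ν := by rw [hνdef]; exact Measure.le_add_right le_rfl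
  have hQle : Q ≤ ν := by rw [hνdef]; exact Measure.le_add_left le_rfl
  have hPν : P ≪ ν := Measure.absolutelyContinuous_of_le hPle
  have hQν : Q ≪ ν := Measure.absolutelyContinuous_of_le hQle
  haveI hνfin : IsFiniteMeasure ν := by rw [hνdef]; infer_instance
  set p : Torus d → ℝ := fun z => (P.rnDeriv ν z).toReal with hpdef
  set q : Torus d → ℝ := fun z => (Q.rnDeriv ν z).toReal with hqdef
  have haff : affinity P Q = ∫ z, Real.sqrt (p z) * Real.sqrt (q z) ∂ν := rfl
  have hpm : Measurable p := (Measure.measurable_rnDeriv P ν).ennreal_toReal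
  have hqm : Measurable q := (Measure.measurable_rnDeriv Q ν).ennreal_toReal
  have hp0 : ∀ z, 0 ≤ p z := fun z => ENNReal.toReal_nonneg
  have hq0 : ∀ z, 0 ≤ q z := fun z => ENNReal.toReal_nonneg
  have hip : Integrable p ν := Measure.integrable_toReal_rnDeriv
  have hiq : Integrable q ν := Measure.integrable_toReal_rnDeriv
  have hp1 : ∀ᵐ z ∂ν, p z ≤ 1 := by
    filter_upwards [Measure.rnDeriv_le_one_of_le hPle] with z hz
    calc p z ≤ (1 : ℝ≥0∞).toReal := ENNReal.toReal_mono (by simp) hz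
      _ = 1 := by simp
  have hq1 : ∀ᵐ z ∂ν, q z ≤ 1 := by
    filter_upwards [Measure.rnDeriv_le_one_of_le hQle] with z hz
    calc q z ≤ (1 : ℝ≥0∞).toReal := ENNReal.toReal_mono (by simp) hz
      _ = 1 := by simp
  have e1 : ∀ g : Torus d → ℝ, ∫ z, g z ∂P = ∫ z, p z * g z ∂ν := by
    intro g
    haveI : P.HaveLebesgueDecomposition ν := by rw [hνdef]; exact Measure.haveLebesgueDecomposition_of_finiteMeasure
    have h := integral_rnDeriv_smul (μ := P) (ν := ν) (f := g) hPν
    simp only [smul_eq_mul] at h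
    rw [← h, hpdef]
  have e2 : ∀ g : Torus d → ℝ, ∫ z, g z ∂Q = ∫ z, q z * g z ∂ν := by
    intro g
    haveI : Q.HaveLebesgueDecomposition ν := by rw [hνdef]; exact Measure.haveLebesgueDecomposition_of_finiteMeasure
    have h := integral_rnDeriv_smul (μ := Q) (ν := ν) (f := g) hQν
    simp only [smul_eq_mul] at h
    rw [← h, hqdef]
  set V : ℝ := (ν Set.univ).toReal with hVdef
  have hV0 : 0 ≤ V := ENNReal.toReal_nonneg
  clear_value ν p q V
  clear hνdef hpdef hqdef
  -- choose δ
  obtain ⟨δ, hδpos, hδ1, hsδ⟩ : ∃ δ : ℝ, 0 < δ ∧ δ ≤ 1 ∧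
      Real.sqrt δ * (4 * (V + 1)) ≤ ε := by
    refine ⟨min 1 ((ε / (4 * (V + 1)))^2), lt_min one_pos (by positivity),
      min_le_left _ _, ?_⟩
    have h1 : Real.sqrt (min 1 ((ε / (4 * (V + 1)))^2)) ≤ ε / (4 * (V + 1)) := by
      calc Real.sqrt (min 1 ((ε / (4 * (V + 1)))^2))
          ≤ Real.sqrt ((ε / (4 * (V + 1)))^2) := Real.sqrt_le_sqrt (min_le_right _ _)
        _ = ε / (4 * (V + 1)) := Real.sqrt_sq (by positivity)
    calc Real.sqrt (min 1 ((ε / (4 * (V + 1)))^2)) * (4 * (V + 1))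
        ≤ (ε / (4 * (V + 1))) * (4 * (V + 1)) :=
          mul_le_mul_of_nonneg_right h1 (by positivity)
      _ = ε := by field_simp
  set p' : Torus d → ℝ := fun z => min (p z) 1 with hp'def
  set q' : Torus d → ℝ := fun z => min (q z) 1 with hq'def
  have hp'm : Measurable p' := hpm.min measurable_const
  have hq'm : Measurable q' := hqm.min measurable_const
  have hp'0 : ∀ z, 0 ≤ p' z := fun z => le_min (hp0 z) zero_le_one
  have hq'0 : ∀ z, 0 ≤ q' z := fun z => le_min (hq0 z) zero_le_one
  have hp'1 : ∀ z, p' z ≤ 1 := fun z => min_le_right _ _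
  have hq'1 : ∀ z, q' z ≤ 1 := fun z => min_le_right _ _
  set g : Torus d → ℝ := fun z => Real.sqrt ((q' z + δ) / (p' z + δ)) with hgdef
  set a : ℝ := Real.sqrt (δ / (1 + δ)) with hadef
  set b : ℝ := Real.sqrt ((1 + δ) / δ) with hbdef
  have ha : 0 < a := Real.sqrt_pos.mpr (div_pos hδpos (by linarith))
  have hg0 : ∀ z, 0 ≤ g z := fun z => Real.sqrt_nonneg _
  have hga : ∀ z, a ≤ g z := fun z => Real.sqrt_le_sqrt
    (div_le_div₀ (by linarith [hq'0 z]) (by linarith [hq'0 z])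
      (by linarith [hp'0 z]) (by linarith [hp'1 z]))
  have hgb : ∀ z, g z ≤ b := fun z => Real.sqrt_le_sqrt
    (div_le_div₀ (by linarith) (by linarith [hq'1 z])
      hδpos (by linarith [hp'0 z]))
  have hab : a ≤ b := by
    have h1 : a ≤ 1 := by
      have h := Real.sqrt_le_sqrt
        (show δ/(1+δ) ≤ 1 by rw [div_le_one (by linarith)]; linarith)
      rwa [Real.sqrt_one, ← hadef] at h
    have h2 : (1:ℝ) ≤ b := by
      have h := Real.sqrt_le_sqrt
        (show (1:ℝ) ≤ (1+δ)/δ by rw [le_div_iff₀ hδpos]; linarith)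
      rwa [Real.sqrt_one, ← hbdef] at h
    linarith
  have hgm : Measurable g := ((hq'm.add_const δ).div (hp'm.add_const δ)).sqrt
  clear_value g a b
  clear hp'def hq'def
  -- a.e. estimate for g
  have hEst : ∀ᵐ z ∂ν, p z * g z + q z * (g z)⁻¹
      ≤ 2 * (Real.sqrt (p z) * Real.sqrt (q z)) + 4 * Real.sqrt δ := by
    filter_upwards [hp1, hq1] with z hpz hqz
    have hp'z : p' z = p z := min_eq_left hpz
    have hq'z : q' z = q z := min_eq_left hqz
    have hs0 : 0 ≤ p z := hp0 z
    have ht0 : 0 ≤ q z := hq0 z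
    have hA : 0 < Real.sqrt (p z + δ) := Real.sqrt_pos.mpr (by linarith)
    have hB : 0 < Real.sqrt (q z + δ) := Real.sqrt_pos.mpr (by linarith)
    have hss : Real.sqrt (p z + δ) * Real.sqrt (p z + δ) = p z + δ :=
      Real.mul_self_sqrt (by linarith)
    have htt : Real.sqrt (q z + δ) * Real.sqrt (q z + δ) = q z + δ :=
      Real.mul_self_sqrt (by linarith)
    have hgz : g z = Real.sqrt (q z + δ) / Real.sqrt (p z + δ) := by
      rw [hgdef]
      simp only
      rw [hq'z, hp'z, Real.sqrt_div (by linarith)]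
    have hginv : (g z)⁻¹ = Real.sqrt (p z + δ) / Real.sqrt (q z + δ) := by
      rw [hgz, inv_div]
    have h1 : p z * g z ≤ Real.sqrt (p z + δ) * Real.sqrt (q z + δ) := by
      rw [hgz, mul_div_assoc', div_le_iff₀ hA]
      nlinarith [hB.le, hδpos.le, hss]
    have h2 : q z * (g z)⁻¹ ≤ Real.sqrt (p z + δ) * Real.sqrt (q z + δ) := by
      rw [hginv, mul_div_assoc', div_le_iff₀ hB]
      nlinarith [hA.le, hδpos.le, htt]
    have h3 : Real.sqrt (p z + δ) * Real.sqrt (q z + δ)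
        ≤ Real.sqrt (p z) * Real.sqrt (q z) + 2 * Real.sqrt δ := by
      have f1 : Real.sqrt (p z + δ) * Real.sqrt (q z + δ)
          = Real.sqrt ((p z + δ) * (q z + δ)) :=
        (Real.sqrt_mul (by linarith) _).symm
      have f2 : (p z + δ) * (q z + δ) ≤ p z * q z + 4 * δ := by nlinarith
      have f3 : Real.sqrt ((p z + δ) * (q z + δ)) ≤ Real.sqrt (p z * q z + 4 * δ) :=
        Real.sqrt_le_sqrt f2
      have f4 : Real.sqrt (p z * q z + 4 * δ)
          ≤ Real.sqrt (p z * q z) + Real.sqrt (4 * δ) :=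
        my_sqrt_add _ _ (mul_nonneg hs0 ht0) (by linarith)
      have f5 : Real.sqrt (p z * q z) = Real.sqrt (p z) * Real.sqrt (q z) :=
        Real.sqrt_mul hs0 _
      have f6 : Real.sqrt (4 * δ) = 2 * Real.sqrt δ := by
        rw [show (4:ℝ) * δ = 2^2 * δ by norm_num, Real.sqrt_mul (by positivity),
          Real.sqrt_sq (by norm_num)]
      rw [f1]
      rw [f5, f6] at f4
      linarith
    linarith
  have hisq : Integrable (fun z => Real.sqrt (p z) * Real.sqrt (q z)) ν := by
    refine ((hip.add hiq).div_const 2).mono'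
      ((hpm.sqrt.mul hqm.sqrt).aestronglyMeasurable) (Eventually.of_forall fun z => ?_)
    have h4 := two_mul_le_add_sq (Real.sqrt (p z)) (Real.sqrt (q z))
    rw [Real.sq_sqrt (hp0 z), Real.sq_sqrt (hq0 z)] at h4
    have hnn : 0 ≤ Real.sqrt (p z) * Real.sqrt (q z) :=
      mul_nonneg (Real.sqrt_nonneg _) (Real.sqrt_nonneg _)
    rw [Real.norm_eq_abs, abs_of_nonneg hnn]
    simp only [Pi.add_apply]
    linarith
  have hgabs : ∀ z, |g z| ≤ b := fun z => by
    rw [abs_of_nonneg (hg0 z)]; exact hgb z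
  have hginvabs : ∀ z, |(g z)⁻¹| ≤ a⁻¹ := fun z => by
    rw [abs_of_nonneg (inv_nonneg.mpr (hg0 z))]
    exact inv_anti₀ ha (hga z)
  have hipg : Integrable (fun z => p z * g z) ν :=
    my_int_mul hip hp0 hgm.aestronglyMeasurable hgabs
  have hiqg : Integrable (fun z => q z * (g z)⁻¹) ν :=
    my_int_mul hiq hq0 hgm.inv.aestronglyMeasurable hginvabs
  have hFg : (∫ z, g z ∂P + ∫ z, (g z)⁻¹ ∂Q) / 2 ≤ affinity P Q + ε / 2 := by
    have hmono : ∫ z, (p z * g z + q z * (g z)⁻¹) ∂ν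
        ≤ ∫ z, (2 * (Real.sqrt (p z) * Real.sqrt (q z)) + 4 * Real.sqrt δ) ∂ν :=
      integral_mono_ae (hipg.add hiqg) ((hisq.const_mul 2).add (integrable_const _)) hEst
    have hsum : ∫ z, (p z * g z + q z * (g z)⁻¹) ∂ν
        = ∫ z, p z * g z ∂ν + ∫ z, q z * (g z)⁻¹ ∂ν := integral_add hipg hiqg
    have hrhs : ∫ z, (2 * (Real.sqrt (p z) * Real.sqrt (q z)) + 4 * Real.sqrt δ) ∂ν
        = 2 * affinity P Q + (4 * Real.sqrt δ) * V := by
      rw [integral_add (hisq.const_mul 2) (integrable_const _), integral_const_mul,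
        integral_const, smul_eq_mul, haff, measureReal_def, ← hVdef]
      ring
    have hδV : (4 * Real.sqrt δ) * V ≤ ε := by
      nlinarith [Real.sqrt_nonneg δ, hsδ, hV0]
    rw [e1 g, e2 (fun z => (g z)⁻¹)]
    rw [hsum, hrhs] at hmono
    linarith
  have hainv2 : (0:ℝ) < 1 + a⁻¹ * a⁻¹ :=
    add_pos_of_pos_of_nonneg one_pos (mul_self_nonneg _)
  set ε2 : ℝ := ε / (2 * (1 + a⁻¹ * a⁻¹)) with hε2def
  have hε2pos : 0 < ε2 := div_pos hε (by linarith)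
  have hig : Integrable g ν :=
    my_bdd_integrable ν hgm.aestronglyMeasurable (fun z => by
      rw [Real.norm_eq_abs]; exact hgabs z)
  obtain ⟨h, hh, hhint⟩ := hig.exists_boundedContinuous_integral_sub_le hε2pos
  set f : Torus d → ℝ := fun z => max a (min b (h z)) with hfdef
  have hfc : Continuous f := continuous_const.max (continuous_const.min h.continuous)
  have hfa : ∀ z, a ≤ f z := fun z => le_max_left _ _
  have hfb : ∀ z, f z ≤ b := fun z => max_le hab (min_le_left _ _)
  have hfz0 : ∀ z, 0 < f z := fun z => lt_of_lt_of_le ha (hfa z)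
  have hgz0 : ∀ z, 0 < g z := fun z => lt_of_lt_of_le ha (hga z)
  have hclamp : ∀ z, |f z - g z| ≤ |h z - g z| := by
    intro z
    have hga' := hga z
    have hgb' := hgb z
    rcases le_total (h z) a with h1 | h1
    · have hfeq : f z = a := by
        simp only [hfdef]
        exact max_eq_left (le_trans (min_le_right _ _) h1)
      rw [hfeq, abs_of_nonpos (by linarith), abs_of_nonpos (by linarith)]
      linarith
    · rcases le_total b (h z) with h2 | h2
      · have hfeq : f z = b := by
          simp only [hfdef]
          rw [min_eq_left h2, max_eq_right hab]
        rw [hfeq, abs_of_nonneg (by linarith), abs_of_nonneg (by linarith)]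
        linarith
      · have hfeq : f z = h z := by
          simp only [hfdef]
          rw [min_eq_right h2, max_eq_right h1]
        rw [hfeq]
  have hfgm : AEStronglyMeasurable (fun z => |f z - g z|) ν :=
    ((hfc.measurable.sub hgm).abs).aestronglyMeasurable
  have hifg : Integrable (fun z => |f z - g z|) ν :=
    my_bdd_integrable ν hfgm (C := b - a) (fun z => by
      rw [Real.norm_eq_abs, abs_abs, abs_sub_le_iff]
      exact ⟨by linarith [hfb z, hga z], by linarith [hgb z, hfa z]⟩)
  have hD : ∫ z, |f z - g z| ∂ν ≤ ε2 := by
    calc ∫ z, |f z - g z| ∂ν ≤ ∫ z, ‖g z - h z‖ ∂ν := by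
          refine integral_mono hifg (hig.sub hhint).norm (fun z => ?_)
          rw [Real.norm_eq_abs, abs_sub_comm (g z) (h z)]
          exact hclamp z
      _ ≤ ε2 := hh
  have habs_nonneg : ∀ z, (0:ℝ) ≤ |f z - g z| := fun z => abs_nonneg _
  have hDP : ∫ z, |f z - g z| ∂P ≤ ∫ z, |f z - g z| ∂ν :=
    integral_mono_measure hPle (Eventually.of_forall habs_nonneg) hifg
  have hDQ : ∫ z, |f z - g z| ∂Q ≤ ∫ z, |f z - g z| ∂ν :=
    integral_mono_measure hQle (Eventually.of_forall habs_nonneg) hifg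
  have hgP : Integrable g P := my_bdd_integrable P hgm.aestronglyMeasurable
    (fun z => by rw [Real.norm_eq_abs]; exact hgabs z)
  have hfP : Integrable f P := my_bdd_integrable P hfc.measurable.aestronglyMeasurable
    (C := b) (fun z => by rw [Real.norm_eq_abs, abs_of_pos (hfz0 z)]; exact hfb z)
  have hfQ : Integrable f Q := my_bdd_integrable Q hfc.measurable.aestronglyMeasurable
    (C := b) (fun z => by rw [Real.norm_eq_abs, abs_of_pos (hfz0 z)]; exact hfb z)
  have hgQ : Integrable g Q := my_bdd_integrable Q hgm.aestronglyMeasurable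
    (fun z => by rw [Real.norm_eq_abs]; exact hgabs z)
  have h5 : ∫ z, f z ∂P ≤ ∫ z, g z ∂P + ∫ z, |f z - g z| ∂ν := by
    have h6 : ∫ z, (f z - g z) ∂P ≤ ∫ z, |f z - g z| ∂P :=
      integral_mono (hfP.sub hgP) (hfP.sub hgP).abs (fun z => le_abs_self _)
    have h7 := integral_sub hfP hgP
    linarith [hDP]
  have hfinvQ : Integrable (fun z => (f z)⁻¹) Q :=
    my_bdd_integrable Q (hfc.measurable.inv).aestronglyMeasurable (C := a⁻¹)
      (fun z => by
        rw [Real.norm_eq_abs, abs_of_pos (inv_pos.mpr (hfz0 z))]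
        exact inv_anti₀ ha (hfa z))
  have hginvQ : Integrable (fun z => (g z)⁻¹) Q :=
    my_bdd_integrable Q hgm.inv.aestronglyMeasurable (C := a⁻¹)
      (fun z => by rw [Real.norm_eq_abs]; exact hginvabs z)
  have hinvpt : ∀ z, |(f z)⁻¹ - (g z)⁻¹| ≤ a⁻¹ * a⁻¹ * |f z - g z| := by
    intro z
    rw [inv_sub_inv (hfz0 z).ne' (hgz0 z).ne', abs_div, abs_mul,
      abs_of_pos (hfz0 z), abs_of_pos (hgz0 z), abs_sub_comm (g z) (f z),
      div_le_iff₀ (mul_pos (hfz0 z) (hgz0 z))]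
    have h1 : (1:ℝ) ≤ a⁻¹ * a⁻¹ * (f z * g z) := by
      have haa : a * a ≤ f z * g z := mul_le_mul (hfa z) (hga z) ha.le (hfz0 z).le
      have he : a⁻¹ * a⁻¹ * (a * a) = 1 := by field_simp
      nlinarith [mul_le_mul_of_nonneg_left haa (mul_self_nonneg a⁻¹)]
    nlinarith [abs_nonneg (f z - g z), h1]
  have hifgQ : Integrable (fun z => |f z - g z|) Q := (hfQ.sub hgQ).abs
  have h8 : ∫ z, (f z)⁻¹ ∂Q ≤ ∫ z, (g z)⁻¹ ∂Q
      + a⁻¹ * a⁻¹ * ∫ z, |f z - g z| ∂ν := by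
    have h9 : ∫ z, ((f z)⁻¹ - (g z)⁻¹) ∂Q ≤ ∫ z, a⁻¹ * a⁻¹ * |f z - g z| ∂Q :=
      integral_mono (hfinvQ.sub hginvQ) (hifgQ.const_mul _)
        (fun z => (le_abs_self _).trans (hinvpt z))
    rw [integral_const_mul] at h9
    have h10 := integral_sub hfinvQ hginvQ
    have h11 : a⁻¹ * a⁻¹ * ∫ z, |f z - g z| ∂Q
        ≤ a⁻¹ * a⁻¹ * ∫ z, |f z - g z| ∂ν :=
      mul_le_mul_of_nonneg_left hDQ (mul_self_nonneg _)
    linarith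
  refine ⟨f, a, hfc, ha, hfa, ?_⟩
  have hfinal : (1 + a⁻¹ * a⁻¹) * ε2 = ε / 2 := by
    rw [hε2def]
    field_simp
  have hmul : (1 + a⁻¹ * a⁻¹) * (∫ z, |f z - g z| ∂ν) ≤ (1 + a⁻¹ * a⁻¹) * ε2 :=
    mul_le_mul_of_nonneg_left hD (by linarith)
  linarith [hFg, h5, h8]

/-- if `P n` converges weakly to `P∞` and `Q n` converges weakly to `Q∞`
(as `n → ∞` in `ℕ^d`), then `limsup_n ρ(P n, Q n) ≤ ρ(P∞, Q∞)`. -/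
theorem statement2 {d : ℕ} (hd : 1 ≤ d)
    (P Q : (Fin d → ℕ) → Measure (Torus d)) (Plim Qlim : Measure (Torus d))
    (hPfin : ∀ n, IsFiniteMeasure (P n)) (hQfin : ∀ n, IsFiniteMeasure (Q n))
    [IsFiniteMeasure Plim] [IsFiniteMeasure Qlim]
    (hP : ∀ f : ContinuousMap (Torus d) ℝ,
      Tendsto (fun n : Fin d → ℕ => ∫ z, f z ∂(P n)) atTop (𝓝 (∫ z, f z ∂Plim)))
    (hQ : ∀ f : ContinuousMap (Torus d) ℝ,
      Tendsto (fun n : Fin d → ℕ => ∫ z, f z ∂(Q n)) atTop (𝓝 (∫ z, f z ∂Qlim))) :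
    Filter.limsup (fun n : Fin d → ℕ => affinity (P n) (Q n)) atTop ≤ affinity Plim Qlim := by
  haveI : Nonempty (Fin d → ℕ) := ⟨fun _ => 0⟩
  refine le_of_forall_pos_le_add fun ε hε => ?_
  obtain ⟨f, a, hfc, ha, hfa, hbound⟩ := exists_good_fun Plim Qlim (half_pos hε)
  have hfz : ∀ z, 0 < f z := fun z => lt_of_lt_of_le ha (hfa z)
  have hfinv : Continuous fun z => (f z)⁻¹ := hfc.inv₀ fun z => (hfz z).ne'
  have hL : Tendsto (fun n : Fin d → ℕ => (∫ z, f z ∂(P n) + ∫ z, (f z)⁻¹ ∂(Q n)) / 2)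
      atTop (𝓝 ((∫ z, f z ∂Plim + ∫ z, (f z)⁻¹ ∂Qlim) / 2)) :=
    ((hP ⟨f, hfc⟩).add (hQ ⟨fun z => (f z)⁻¹, hfinv⟩)).div_const 2
  have h2 : ∀ᶠ n in atTop, (∫ z, f z ∂(P n) + ∫ z, (f z)⁻¹ ∂(Q n)) / 2
      < affinity Plim Qlim + ε := hL.eventually_lt_const (by linarith)
  have hev : ∀ᶠ n in (atTop : Filter (Fin d → ℕ)),
      affinity (P n) (Q n) ≤ affinity Plim Qlim + ε := by
    filter_upwards [h2] with n hn
    haveI := hPfin n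
    haveI := hQfin n
    exact le_trans (affinity_le_half (P n) (Q n) hfc ha hfa) hn.le
  exact limsup_le_of_le
    (isCoboundedUnder_le_of_le atTop (fun n => affinity_nonneg (P n) (Q n))) hev

end
end

section
/- (Two-parameter Van der Corput inequality in a C*-algebra.) Let A be a C*-algebra, let n₁, n₂ ≥ 1 and 0 ≤ h_i ≤ n_i (i = 1,2) be natural numbers, and let a_{j₁,j₂} ∈ A for 1 ≤ j₁ ≤ n₁, 1 ≤ j₂ ≤ n₂, with the convention a_{j₁,j₂} = 0 whenever j₁ or j₂ lies outside these ranges. Set H = (h₁+1)(h₂+1). Then ‖(1/(n₁n₂)) Σ_{j₁=1}^{n₁} Σ_{j₂=1}^{n₂} a_{j₁,j₂}‖² ≤ (4/H) ‖(1/(n₁n₂)) Σ_{j₁=1}^{n₁} Σ_{j₂=1}^{n₂} a_{j₁,j₂}* a_{j₁,j₂}‖ + (8/H) [ Σ_{d₁=1}^{h₁} ‖(1/(n₁n₂)) Σ_{j₁=1}^{n₁} Σ_{j₂=1}^{n₂} a_{j₁,j₂}* a_{j₁+d₁,j₂}‖ + Σ_{d₂=1}^{h₂} ‖(1/(n₁n₂))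 Σ_{j₁=1}^{n₁} Σ_{j₂=1}^{n₂} a_{j₁,j₂}* a_{j₁,j₂+d₂}‖ + Σ_{d₁=1}^{h₁} Σ_{d₂=1}^{h₂} ‖(1/(n₁n₂)) Σ_{j₁=1}^{n₁} Σ_{j₂=1}^{n₂} a_{j₁,j₂}* a_{j₁+d₁,j₂+d₂}‖ + Σ_{d₁=1}^{h₁} Σ_{d₂=1}^{h₂} ‖(1/(n₁n₂)) Σ_{j₁=1}^{n₁} Σ_{j₂=1}^{n₂} a_{j₁+d₁,j₂}* a_{j₁,j₂+d₂}‖ ]. -/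
open Finset
noncomputable section

section Helpers
variable {M : Type*} [AddCommMonoid M]

lemma shift_sum_core (f : ℕ → M) (n h m : ℕ) (hm : m ≤ h)
    (hzero : ∀ j, (j ≤ m ∨ n + m < j) → f j = 0) :
    ∑ j ∈ Icc 1 (n + h), f j = ∑ k ∈ Icc 1 n, f (k + m) := by
  have h1 : ∑ j ∈ Icc (1+m) (n+m), f j = ∑ k ∈ Icc 1 n, f (k + m) := by
    rw [← Finset.map_add_right_Icc 1 n m, Finset.sum_map]
    simp [addRightEmbedding]
  rw [← h1]
  refine (Finset.sum_subset ?_ ?_).symm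
  · intro x hx; simp only [mem_Icc] at *; omega
  · intro x hx hx'; simp only [mem_Icc] at hx hx'; exact hzero x (by omega)

lemma shift_sum_single (f : ℕ → M) (n h b : ℕ) (hb : b ≤ h)
    (h0 : ∀ k, k = 0 ∨ n < k → f k = 0) :
    ∑ j ∈ Icc 1 (n + h), f (j + b - h) = ∑ k ∈ Icc 1 n, f k := by
  rw [shift_sum_core (fun j => f (j + b - h)) n h (h - b) (by omega)
    (fun j hj => h0 _ (by omega))]
  exact Finset.sum_congr rfl fun k _ => by congr 1; omega

lemma shift_sum_pairA (ψ : ℕ → ℕ → M) (n h b b' : ℕ) (hb : b ≤ h) (hb' : b' ≤ h)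
    (hbb : b ≤ b')
    (hX : ∀ x y, x = 0 ∨ n < x → ψ x y = 0) :
    ∑ j ∈ Icc 1 (n + h), ψ (j + b - h) (j + b' - h)
      = ∑ k ∈ Icc 1 n, ψ k (k + (b' - b)) := by
  rw [shift_sum_core (fun j => ψ (j + b - h) (j + b' - h)) n h (h - b) (by omega)
    (fun j hj => hX _ _ (by omega))]
  refine Finset.sum_congr rfl fun k _ => ?_
  congr 1 <;> omega

lemma shift_sum_pairB (ψ : ℕ → ℕ → M) (n h b b' : ℕ) (hb : b ≤ h) (hb' : b' ≤ h)
    (hbb : b' ≤ b)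
    (hY : ∀ x y, y = 0 ∨ n < y → ψ x y = 0) :
    ∑ j ∈ Icc 1 (n + h), ψ (j + b - h) (j + b' - h)
      = ∑ k ∈ Icc 1 n, ψ (k + (b - b')) k := by
  rw [shift_sum_core (fun j => ψ (j + b - h) (j + b' - h)) n h (h - b') (by omega)
    (fun j hj => hY _ _ (by omega))]
  refine Finset.sum_congr rfl fun k _ => ?_
  congr 1 <;> omega

lemma box_decomp (G : ℤ → M) (h : ℕ) :
    ∑ d ∈ Icc (-(h:ℤ)) h, G d
      = (∑ e ∈ Icc 1 h, G (-(e:ℤ))) + G 0 + ∑ e ∈ Icc 1 h, G (e:ℤ) := by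
  induction h with
  | zero => simp
  | succ h ih =>
      have h1 : (Icc (-(h+1:ℕ):ℤ) (h+1:ℕ)) =
          insert (-(h+1:ℕ):ℤ) (insert ((h+1:ℕ):ℤ) (Icc (-(h:ℕ):ℤ) h)) := by
        ext x; simp only [mem_Icc, mem_insert]; push_cast; omega
      have h2 : (Icc 1 (h+1)) = insert (h+1) (Icc 1 h) := by
        ext x; simp only [mem_Icc, mem_insert]; omega
      rw [h1, h2, Finset.sum_insert (by simp only [mem_insert, mem_Icc]; push_cast; omega),
        Finset.sum_insert (by simp only [mem_Icc]; push_cast; omega),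
        Finset.sum_insert (by simp only [mem_Icc]; omega),
        Finset.sum_insert (by simp only [mem_Icc]; omega), ih]
      push_cast
      abel

end Helpers

section CS
variable {A : Type*} [NonUnitalRing A] [PartialOrder A] [StarRing A] [StarOrderedRing A]

lemma pair_cs (x z : A) : star x * z + star z * x ≤ star x * x + star z * z := by
  have h := star_mul_self_nonneg (x - z)
  have he : star (x - z) * (x - z)
      = (star x * x + star z * z) - (star x * z + star z * x) := by
    simp only [star_sub, sub_mul, mul_sub]
    abel
  rw [he] at h
  exact sub_nonneg.mp h

lemma sum_cs {ι : Type*} [DecidableEq ι] (s : Finset ι) (y : ι → A) :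
    star (∑ i ∈ s, y i) * (∑ i ∈ s, y i) ≤ s.card • ∑ i ∈ s, star (y i) * y i := by
  induction s using Finset.induction with
  | empty => simp
  | @insert i t hnm ih =>
      rw [Finset.sum_insert hnm, Finset.sum_insert hnm, Finset.card_insert_of_notMem hnm]
      set T := ∑ j ∈ t, y j with hT
      have hexp : star (y i + T) * (y i + T)
          = star (y i) * y i + (star (y i) * T + star T * y i) + star T * T := by
        rw [star_add, add_mul, mul_add, mul_add]; abel
      have hB : star (y i) * T + star T * y i
          ≤ t.card • (star (y i) * y i) + ∑ j ∈ t, star (y j) * y j := by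
        rw [hT, Finset.mul_sum, star_sum, Finset.sum_mul, ← Finset.sum_add_distrib]
        calc ∑ j ∈ t, (star (y i) * y j + star (y j) * y i)
            ≤ ∑ j ∈ t, (star (y i) * y i + star (y j) * y j) :=
              Finset.sum_le_sum fun j _ => pair_cs (y i) (y j)
          _ = t.card • (star (y i) * y i) + ∑ j ∈ t, star (y j) * y j := by
              rw [Finset.sum_add_distrib, Finset.sum_const]
      calc star (y i + T) * (y i + T)
          = star (y i) * y i + (star (y i) * T + star T * y i) + star T * T := hexp
        _ ≤ star (y i) * y i + (t.card • (star (y i) * y i) + ∑ j ∈ t, star (y j) * y j)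
              + t.card • ∑ j ∈ t, star (y j) * y j :=
            add_le_add (add_le_add le_rfl hB) ih
        _ = (t.card + 1) • (star (y i) * y i + ∑ j ∈ t, star (y j) * y j) := by
            rw [succ_nsmul, smul_add]
            abel
end CS

section Count
lemma count1 (F : ℤ → ℝ) (hF : ∀ d, 0 ≤ F d) (h : ℕ) :
    ∑ b ∈ Icc 0 h, ∑ b' ∈ Icc 0 h, F ((b' : ℤ) - b)
      ≤ ((h : ℝ) + 1) * ∑ d ∈ Icc (-(h:ℤ)) h, F d := by
  have key : ∑ p ∈ Icc 0 h ×ˢ Icc 0 h, F ((p.2 : ℤ) - p.1)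
      = ∑ d ∈ Icc (-(h:ℤ)) h, ∑ p ∈ (Icc 0 h ×ˢ Icc 0 h).filter
          (fun p => (p.2 : ℤ) - p.1 = d), F ((p.2 : ℤ) - p.1) := by
    refine (Finset.sum_fiberwise_of_maps_to ?_ _).symm
    intro p hp
    simp only [mem_product, mem_Icc] at hp
    simp only [mem_Icc]
    omega
  rw [← Finset.sum_product']
  calc ∑ p ∈ Icc 0 h ×ˢ Icc 0 h, F ((p.2 : ℤ) - p.1)
      = ∑ d ∈ Icc (-(h:ℤ)) h, ∑ p ∈ (Icc 0 h ×ˢ Icc 0 h).filter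
          (fun p => (p.2 : ℤ) - p.1 = d), F ((p.2 : ℤ) - p.1) := key
    _ ≤ ∑ d ∈ Icc (-(h:ℤ)) h, ((h : ℝ) + 1) * F d := by
        refine Finset.sum_le_sum fun d _ => ?_
        have hcard : ((Icc 0 h ×ˢ Icc 0 h).filter
            (fun p => (p.2 : ℤ) - p.1 = d)).card ≤ h + 1 := by
          have := Finset.card_le_card_of_injOn
            (s := (Icc 0 h ×ˢ Icc 0 h).filter (fun p => (p.2 : ℤ) - p.1 = d))
            (t := Icc 0 h) (fun (p : ℕ × ℕ) => p.1)
            (fun p hp => by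
              simp only [Finset.mem_coe, mem_filter, mem_product, mem_Icc] at hp
              exact mem_Icc.mpr ⟨Nat.zero_le _, hp.1.1.2⟩)
            (fun p hp q hq hpq => by
              simp only [Finset.mem_coe, mem_filter, mem_product, mem_Icc] at hp hq
              have h1 := hp.2; have h2 := hq.2
              have h3 : p.1 = q.1 := hpq
              ext
              · exact h3
              · omega)
          simpa [Nat.card_Icc] using this
        calc ∑ p ∈ (Icc 0 h ×ˢ Icc 0 h).filter (fun p => (p.2 : ℤ) - p.1 = d),
              F ((p.2 : ℤ) - p.1)
            = ∑ p ∈ (Icc 0 h ×ˢ Icc 0 h).filter (fun p => (p.2 : ℤ) - p.1 = d), F d := by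
              refine Finset.sum_congr rfl fun p hp => ?_
              simp only [mem_filter] at hp
              rw [hp.2]
          _ = ((Icc 0 h ×ˢ Icc 0 h).filter (fun p => (p.2 : ℤ) - p.1 = d)).card • F d :=
              Finset.sum_const _
          _ ≤ ((h : ℝ) + 1) * F d := by
              rw [nsmul_eq_mul]
              have : ((((Icc 0 h ×ˢ Icc 0 h).filter
                  (fun p => (p.2 : ℤ) - p.1 = d)).card : ℝ)) ≤ (h : ℝ) + 1 := by
                exact_mod_cast hcard
              exact mul_le_mul_of_nonneg_right this (hF d)
    _ = ((h : ℝ) + 1) * ∑ d ∈ Icc (-(h:ℤ)) h, F d := by rw [Finset.mul_sum]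
end Count

lemma count2 (F : ℤ → ℤ → ℝ) (hF : ∀ d1 d2, 0 ≤ F d1 d2) (h1 h2 : ℕ) :
    ∑ b1 ∈ Icc 0 h1, ∑ b1' ∈ Icc 0 h1, ∑ b2 ∈ Icc 0 h2, ∑ b2' ∈ Icc 0 h2,
        F ((b1' : ℤ) - b1) ((b2' : ℤ) - b2)
      ≤ ((h1 : ℝ) + 1) * (((h2 : ℝ) + 1) *
          ∑ d1 ∈ Icc (-(h1:ℤ)) h1, ∑ d2 ∈ Icc (-(h2:ℤ)) h2, F d1 d2) := by
  have step1 : ∑ b1 ∈ Icc 0 h1, ∑ b1' ∈ Icc 0 h1, ∑ b2 ∈ Icc 0 h2, ∑ b2' ∈ Icc 0 h2,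
        F ((b1' : ℤ) - b1) ((b2' : ℤ) - b2)
      ≤ ∑ b1 ∈ Icc 0 h1, ∑ b1' ∈ Icc 0 h1, ((h2 : ℝ) + 1) *
          ∑ d2 ∈ Icc (-(h2:ℤ)) h2, F ((b1' : ℤ) - b1) d2 :=
    Finset.sum_le_sum fun b1 _ => Finset.sum_le_sum fun b1' _ =>
      count1 (F ((b1' : ℤ) - b1)) (fun d => hF _ d) h2
  have step2 : ∑ b1 ∈ Icc 0 h1, ∑ b1' ∈ Icc 0 h1, ((h2 : ℝ) + 1) *
          ∑ d2 ∈ Icc (-(h2:ℤ)) h2, F ((b1' : ℤ) - b1) d2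
      = ((h2 : ℝ) + 1) * ∑ b1 ∈ Icc 0 h1, ∑ b1' ∈ Icc 0 h1,
          ∑ d2 ∈ Icc (-(h2:ℤ)) h2, F ((b1' : ℤ) - b1) d2 := by
    rw [Finset.mul_sum]
    exact Finset.sum_congr rfl fun b1 _ => by rw [Finset.mul_sum]
  have step3 : ∑ b1 ∈ Icc 0 h1, ∑ b1' ∈ Icc 0 h1,
          ∑ d2 ∈ Icc (-(h2:ℤ)) h2, F ((b1' : ℤ) - b1) d2
      ≤ ((h1 : ℝ) + 1) * ∑ d1 ∈ Icc (-(h1:ℤ)) h1, ∑ d2 ∈ Icc (-(h2:ℤ)) h2, F d1 d2 :=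
    count1 (fun d1 => ∑ d2 ∈ Icc (-(h2:ℤ)) h2, F d1 d2)
      (fun d1 => Finset.sum_nonneg fun d2 _ => hF d1 d2) h1
  calc _ ≤ _ := step1
    _ = _ := step2
    _ ≤ ((h2 : ℝ) + 1) * (((h1 : ℝ) + 1) *
          ∑ d1 ∈ Icc (-(h1:ℤ)) h1, ∑ d2 ∈ Icc (-(h2:ℤ)) h2, F d1 d2) :=
        mul_le_mul_of_nonneg_left step3 (by positivity)
    _ = _ := by ring

section NormCS
variable {A : Type*} [NormedRing A] [StarRing A] [CStarRing A]
    [NormedAlgebra ℂ A] [StarModule ℂ A] [CompleteSpace A]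

lemma norm_sum_sq_le {ι : Type*} [DecidableEq ι] (s : Finset ι) (y : ι → A) :
    ‖∑ i ∈ s, y i‖ ^ 2 ≤ (s.card : ℝ) * ‖∑ i ∈ s, star (y i) * y i‖ := by
  letI : CStarAlgebra A := ⟨⟩
  letI := CStarAlgebra.spectralOrder A
  haveI := CStarAlgebra.spectralOrderedRing A
  have h1 : ‖∑ i ∈ s, y i‖ ^ 2 = ‖star (∑ i ∈ s, y i) * ∑ i ∈ s, y i‖ := by
    rw [CStarRing.norm_star_mul_self]; ring
  rw [h1]
  calc ‖star (∑ i ∈ s, y i) * ∑ i ∈ s, y i‖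
      ≤ ‖s.card • ∑ i ∈ s, star (y i) * y i‖ :=
        CStarAlgebra.norm_le_norm_of_nonneg_of_le (star_mul_self_nonneg _) (sum_cs s y)
    _ ≤ (s.card : ℝ) * ‖∑ i ∈ s, star (y i) * y i‖ := norm_nsmul_le
end NormCS


section StarHelper
variable {A : Type*} [NormedRing A] [StarRing A] [CStarRing A]
lemma norm_star_double_sum (s t : Finset ℕ) (f g : ℕ → ℕ → A) :
    ‖∑ k1 ∈ s, ∑ k2 ∈ t, star (f k1 k2) * g k1 k2‖
      = ‖∑ k1 ∈ s, ∑ k2 ∈ t, star (g k1 k2) * f k1 k2‖ := by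
  rw [← norm_star]
  congr 1
  simp [star_sum, star_mul]
end StarHelper

lemma final_algebra (r Hr ns t0 s1 s2 s3 s4 : ℝ) (hr : 0 < r) (hHr : 0 < Hr)
    (key : ns^2 ≤ (4*r/Hr)*t0 + (8*r/Hr)*(s1+s2+s3+s4)) :
    (r⁻¹*ns)^2 ≤ 4/Hr * (r⁻¹*t0) + 8/Hr * (r⁻¹*s1 + r⁻¹*s2 + r⁻¹*s3 + r⁻¹*s4) := by
  have h2 : (r⁻¹*ns)^2 = r⁻¹^2 * ns^2 := by ring
  rw [h2]
  calc r⁻¹^2 * ns^2 ≤ r⁻¹^2 * ((4*r/Hr)*t0 + (8*r/Hr)*(s1+s2+s3+s4)) :=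
        mul_le_mul_of_nonneg_left key (by positivity)
    _ = 4/Hr * (r⁻¹*t0) + 8/Hr * (r⁻¹*s1 + r⁻¹*s2 + r⁻¹*s3 + r⁻¹*s4) := by
        field_simp

set_option maxHeartbeats 2000000 in
/-- two-parameter Van der Corput inequality in a C*-algebra:
for `a_{j₁,j₂} ∈ A` supported in `1 ≤ j₁ ≤ n₁`, `1 ≤ j₂ ≤ n₂`, and `0 ≤ h_i ≤ n_i`,
with `H = (h₁+1)(h₂+1)`,
`‖(1/(n₁n₂)) ∑_{j₁,j₂} a_{j₁,j₂}‖² ≤ (4/H) ‖(1/(n₁n₂)) ∑ a* a‖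
  + (8/H) [∑_{d₁=1}^{h₁} ‖(1/(n₁n₂)) ∑ a_{j₁,j₂}* a_{j₁+d₁,j₂}‖
  + ∑_{d₂=1}^{h₂} ‖(1/(n₁n₂)) ∑ a_{j₁,j₂}* a_{j₁,j₂+d₂}‖
  + ∑_{d₁,d₂} ‖(1/(n₁n₂)) ∑ a_{j₁,j₂}* a_{j₁+d₁,j₂+d₂}‖
  + ∑_{d₁,d₂} ‖(1/(n₁n₂)) ∑ a_{j₁+d₁,j₂}* a_{j₁,j₂+d₂}‖]`. -/
theorem statement10 {A : Type*} [NormedRing A] [StarRing A] [CStarRing A]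
    [NormedAlgebra ℂ A] [StarModule ℂ A] [CompleteSpace A]
    (n₁ n₂ h₁ h₂ : ℕ) (hn₁ : 1 ≤ n₁) (hn₂ : 1 ≤ n₂) (hh₁ : h₁ ≤ n₁) (hh₂ : h₂ ≤ n₂)
    (a : ℕ → ℕ → A)
    (hsupp : ∀ j₁ j₂, j₁ = 0 ∨ n₁ < j₁ ∨ j₂ = 0 ∨ n₂ < j₂ → a j₁ j₂ = 0) :
    ‖((n₁ * n₂ : ℂ))⁻¹ • ∑ j₁ ∈ Icc 1 n₁, ∑ j₂ ∈ Icc 1 n₂, a j₁ j₂‖ ^ 2 ≤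
      (4 / (((h₁ : ℝ) + 1) * ((h₂ : ℝ) + 1))) *
          ‖((n₁ * n₂ : ℂ))⁻¹ • ∑ j₁ ∈ Icc 1 n₁, ∑ j₂ ∈ Icc 1 n₂,
              star (a j₁ j₂) * a j₁ j₂‖ +
        (8 / (((h₁ : ℝ) + 1) * ((h₂ : ℝ) + 1))) *
          ((∑ d₁ ∈ Icc 1 h₁,
              ‖((n₁ * n₂ : ℂ))⁻¹ • ∑ j₁ ∈ Icc 1 n₁, ∑ j₂ ∈ Icc 1 n₂,
                  star (a j₁ j₂) * a (j₁ + d₁) j₂‖) +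
            (∑ d₂ ∈ Icc 1 h₂,
              ‖((n₁ * n₂ : ℂ))⁻¹ • ∑ j₁ ∈ Icc 1 n₁, ∑ j₂ ∈ Icc 1 n₂,
                  star (a j₁ j₂) * a j₁ (j₂ + d₂)‖) +
            (∑ d₁ ∈ Icc 1 h₁, ∑ d₂ ∈ Icc 1 h₂,
              ‖((n₁ * n₂ : ℂ))⁻¹ • ∑ j₁ ∈ Icc 1 n₁, ∑ j₂ ∈ Icc 1 n₂,
                  star (a j₁ j₂) * a (j₁ + d₁) (j₂ + d₂)‖) +
            (∑ d₁ ∈ Icc 1 h₁, ∑ d₂ ∈ Icc 1 h₂,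
              ‖((n₁ * n₂ : ℂ))⁻¹ • ∑ j₁ ∈ Icc 1 n₁, ∑ j₂ ∈ Icc 1 n₂,
                  star (a (j₁ + d₁) j₂) * a j₁ (j₂ + d₂)‖)) := by
  classical
  -- abbreviations
  set S : A := ∑ j₁ ∈ Icc 1 n₁, ∑ j₂ ∈ Icc 1 n₂, a j₁ j₂ with hSdef
  set B : Finset (ℕ × ℕ) := Icc 0 h₁ ×ˢ Icc 0 h₂ with hBdef
  set J : Finset (ℕ × ℕ) := Icc 1 (n₁ + h₁) ×ˢ Icc 1 (n₂ + h₂) with hJdef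
  set Y : ℕ × ℕ → A :=
    fun j => ∑ b ∈ B, a (j.1 + b.1 - h₁) (j.2 + b.2 - h₂) with hYdef
  set W : ℕ × ℕ → ℕ × ℕ → A := fun b b' => ∑ j ∈ J,
      star (a (j.1 + b.1 - h₁) (j.2 + b.2 - h₂))
        * a (j.1 + b'.1 - h₁) (j.2 + b'.2 - h₂) with hWdef
  -- the canonical comparison quantities
  set T0 : ℝ := ‖∑ k1 ∈ Icc 1 n₁, ∑ k2 ∈ Icc 1 n₂, star (a k1 k2) * a k1 k2‖ with hT0def
  set T1 : ℕ → ℝ := fun e =>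
    ‖∑ k1 ∈ Icc 1 n₁, ∑ k2 ∈ Icc 1 n₂, star (a k1 k2) * a (k1 + e) k2‖ with hT1def
  set T2 : ℕ → ℝ := fun e =>
    ‖∑ k1 ∈ Icc 1 n₁, ∑ k2 ∈ Icc 1 n₂, star (a k1 k2) * a k1 (k2 + e)‖ with hT2def
  set T3 : ℕ → ℕ → ℝ := fun e1 e2 =>
    ‖∑ k1 ∈ Icc 1 n₁, ∑ k2 ∈ Icc 1 n₂, star (a k1 k2) * a (k1 + e1) (k2 + e2)‖ with hT3def
  set T4 : ℕ → ℕ → ℝ := fun e1 e2 =>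
    ‖∑ k1 ∈ Icc 1 n₁, ∑ k2 ∈ Icc 1 n₂, star (a (k1 + e1) k2) * a k1 (k2 + e2)‖ with hT4def
  set F : ℤ → ℤ → ℝ := fun d1 d2 =>
    if 0 ≤ d1 then
      if 0 ≤ d2 then
        ‖∑ k1 ∈ Icc 1 n₁, ∑ k2 ∈ Icc 1 n₂,
            star (a k1 k2) * a (k1 + d1.toNat) (k2 + d2.toNat)‖
      else
        ‖∑ k1 ∈ Icc 1 n₁, ∑ k2 ∈ Icc 1 n₂,
            star (a k1 (k2 + (-d2).toNat)) * a (k1 + d1.toNat) k2‖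
    else
      if 0 ≤ d2 then
        ‖∑ k1 ∈ Icc 1 n₁, ∑ k2 ∈ Icc 1 n₂,
            star (a (k1 + (-d1).toNat) k2) * a k1 (k2 + d2.toNat)‖
      else
        ‖∑ k1 ∈ Icc 1 n₁, ∑ k2 ∈ Icc 1 n₂,
            star (a (k1 + (-d1).toNat) (k2 + (-d2).toNat)) * a k1 k2‖ with hFdef
  have hFnonneg : ∀ d1 d2, 0 ≤ F d1 d2 := by
    intro d1 d2
    rw [hFdef]
    dsimp only
    split <;> split <;> exact norm_nonneg _
  -- support facts
  have haX : ∀ x y, x = 0 ∨ n₁ < x → a x y = 0 := by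
    intro x y hx
    rcases hx with h | h
    · exact hsupp x y (Or.inl h)
    · exact hsupp x y (Or.inr (Or.inl h))
  have haY : ∀ x y, y = 0 ∨ n₂ < y → a x y = 0 := by
    intro x y hy
    rcases hy with h | h
    · exact hsupp x y (Or.inr (Or.inr (Or.inl h)))
    · exact hsupp x y (Or.inr (Or.inr (Or.inr h)))
  -- Step 1 : replication
  have hrep : ∑ j ∈ J, Y j = ((h₁ + 1) * (h₂ + 1)) • S := by
    have hswap : ∑ j ∈ J, Y j = ∑ b ∈ B, ∑ j ∈ J, a (j.1 + b.1 - h₁) (j.2 + b.2 - h₂) := by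
      rw [hYdef]
      exact Finset.sum_comm
    have hfix : ∀ b ∈ B, ∑ j ∈ J, a (j.1 + b.1 - h₁) (j.2 + b.2 - h₂) = S := by
      intro b hb
      rw [hBdef] at hb
      obtain ⟨hb1, hb2⟩ := Finset.mem_product.mp hb
      rw [Finset.mem_Icc] at hb1 hb2
      rw [hJdef, Finset.sum_product]
      have hinner : ∀ x, ∑ j2 ∈ Icc 1 (n₂ + h₂), a x (j2 + b.2 - h₂)
          = ∑ k2 ∈ Icc 1 n₂, a x k2 := fun x =>
        shift_sum_single (a x) n₂ h₂ b.2 hb2.2 (fun k hk => haY x k hk)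
      calc ∑ j1 ∈ Icc 1 (n₁ + h₁), ∑ j2 ∈ Icc 1 (n₂ + h₂),
            a (j1 + b.1 - h₁) (j2 + b.2 - h₂)
          = ∑ j1 ∈ Icc 1 (n₁ + h₁), ∑ k2 ∈ Icc 1 n₂, a (j1 + b.1 - h₁) k2 :=
            Finset.sum_congr rfl fun j1 _ => hinner _
        _ = S := by
            rw [hSdef]
            exact shift_sum_single (fun k1 => ∑ k2 ∈ Icc 1 n₂, a k1 k2) n₁ h₁ b.1 hb1.2
              (fun k hk => Finset.sum_eq_zero fun k2 _ => haX k k2 hk)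
    rw [hswap, Finset.sum_congr rfl hfix, Finset.sum_const]
    congr 1
    rw [hBdef, Finset.card_product, Nat.card_Icc, Nat.card_Icc]
    simp [Nat.add_sub_cancel]
  -- Step 2 : Cauchy-Schwarz
  have hcs : ‖∑ j ∈ J, Y j‖ ^ 2 ≤ (((n₁ + h₁) * (n₂ + h₂) : ℕ) : ℝ) *
      ‖∑ j ∈ J, star (Y j) * Y j‖ := by
    have := norm_sum_sq_le J Y
    have hcard : J.card = (n₁ + h₁) * (n₂ + h₂) := by
      rw [hJdef, Finset.card_product, Nat.card_Icc, Nat.card_Icc]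
      simp
    rwa [hcard] at this
  -- Step 3 : expansion
  have hQ : ∑ j ∈ J, star (Y j) * Y j = ∑ b ∈ B, ∑ b' ∈ B, W b b' := by
    have hexp : ∀ j, star (Y j) * Y j = ∑ b ∈ B, ∑ b' ∈ B,
        star (a (j.1 + b.1 - h₁) (j.2 + b.2 - h₂))
          * a (j.1 + b'.1 - h₁) (j.2 + b'.2 - h₂) := by
      intro j
      rw [hYdef]
      dsimp only
      rw [star_sum, Finset.sum_mul_sum]
    calc ∑ j ∈ J, star (Y j) * Y j
        = ∑ j ∈ J, ∑ b ∈ B, ∑ b' ∈ B,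
            star (a (j.1 + b.1 - h₁) (j.2 + b.2 - h₂))
              * a (j.1 + b'.1 - h₁) (j.2 + b'.2 - h₂) :=
          Finset.sum_congr rfl fun j _ => hexp j
      _ = ∑ b ∈ B, ∑ j ∈ J, ∑ b' ∈ B,
            star (a (j.1 + b.1 - h₁) (j.2 + b.2 - h₂))
              * a (j.1 + b'.1 - h₁) (j.2 + b'.2 - h₂) := Finset.sum_comm
      _ = ∑ b ∈ B, ∑ b' ∈ B, W b b' := by
          refine Finset.sum_congr rfl fun b _ => ?_
          rw [hWdef]
          exact Finset.sum_comm
  -- Step 4 : identification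
  have hW : ∀ b ∈ B, ∀ b' ∈ B, ‖W b b'‖ = F ((b'.1 : ℤ) - b.1) ((b'.2 : ℤ) - b.2) := by
    intro b hb b' hb'
    rw [hBdef] at hb hb'
    obtain ⟨hb1, hb2⟩ := Finset.mem_product.mp hb
    obtain ⟨hb1', hb2'⟩ := Finset.mem_product.mp hb'
    rw [Finset.mem_Icc] at hb1 hb2 hb1' hb2'
    have hWps : W b b' = ∑ j1 ∈ Icc 1 (n₁ + h₁), ∑ j2 ∈ Icc 1 (n₂ + h₂),
        star (a (j1 + b.1 - h₁) (j2 + b.2 - h₂)) * a (j1 + b'.1 - h₁) (j2 + b'.2 - h₂) := by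
      rw [hWdef, hJdef]
      exact Finset.sum_product _ _ _
    rw [hWps]
    have hin2A : b.2 ≤ b'.2 → ∀ u v : ℕ,
        ∑ j2 ∈ Icc 1 (n₂ + h₂), star (a u (j2 + b.2 - h₂)) * a v (j2 + b'.2 - h₂)
          = ∑ k2 ∈ Icc 1 n₂, star (a u k2) * a v (k2 + (b'.2 - b.2)) := fun hc u v =>
      shift_sum_pairA (fun y y' => star (a u y) * a v y') n₂ h₂ b.2 b'.2 hb2.2 hb2'.2 hc
        (fun y y' hy => by show star (a u y) * a v y' = 0; rw [haY u y hy, star_zero, zero_mul])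
    have hin2B : b'.2 ≤ b.2 → ∀ u v : ℕ,
        ∑ j2 ∈ Icc 1 (n₂ + h₂), star (a u (j2 + b.2 - h₂)) * a v (j2 + b'.2 - h₂)
          = ∑ k2 ∈ Icc 1 n₂, star (a u (k2 + (b.2 - b'.2))) * a v k2 := fun hc u v =>
      shift_sum_pairB (fun y y' => star (a u y) * a v y') n₂ h₂ b.2 b'.2 hb2.2 hb2'.2 hc
        (fun y y' hy => by show star (a u y) * a v y' = 0; rw [haY v y' hy, mul_zero])
    rcases le_or_gt b.1 b'.1 with hc1 | hc1
    · have step1 : (∑ j1 ∈ Icc 1 (n₁ + h₁), ∑ j2 ∈ Icc 1 (n₂ + h₂),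
          star (a (j1 + b.1 - h₁) (j2 + b.2 - h₂)) * a (j1 + b'.1 - h₁) (j2 + b'.2 - h₂))
          = ∑ k1 ∈ Icc 1 n₁, ∑ j2 ∈ Icc 1 (n₂ + h₂),
              star (a k1 (j2 + b.2 - h₂)) * a (k1 + (b'.1 - b.1)) (j2 + b'.2 - h₂) :=
        shift_sum_pairA (fun x x' => ∑ j2 ∈ Icc 1 (n₂ + h₂),
            star (a x (j2 + b.2 - h₂)) * a x' (j2 + b'.2 - h₂)) n₁ h₁ b.1 b'.1
          hb1.2 hb1'.2 hc1
          (fun x x' hx => Finset.sum_eq_zero fun j2 _ => by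
            show star (a x (j2 + b.2 - h₂)) * a x' (j2 + b'.2 - h₂) = 0
            rw [haX x _ hx, star_zero, zero_mul])
      rw [step1]
      have hd1 : (0:ℤ) ≤ (b'.1 : ℤ) - b.1 := by omega
      have ht1 : ((b'.1 : ℤ) - b.1).toNat = b'.1 - b.1 := by omega
      rcases le_or_gt b.2 b'.2 with hc2 | hc2
      · rw [Finset.sum_congr rfl (fun k1 _ => hin2A hc2 k1 (k1 + (b'.1 - b.1)))]
        have hd2 : (0:ℤ) ≤ (b'.2 : ℤ) - b.2 := by omega
        have ht2 : ((b'.2 : ℤ) - b.2).toNat = b'.2 - b.2 := by omega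
        rw [hFdef]
        dsimp only
        rw [if_pos hd1, if_pos hd2, ht1, ht2]
      · rw [Finset.sum_congr rfl (fun k1 _ => hin2B hc2.le k1 (k1 + (b'.1 - b.1)))]
        have hd2 : ¬ (0:ℤ) ≤ (b'.2 : ℤ) - b.2 := by omega
        have ht2 : (-((b'.2 : ℤ) - b.2)).toNat = b.2 - b'.2 := by omega
        rw [hFdef]
        dsimp only
        rw [if_pos hd1, if_neg hd2, ht1, ht2]
    · have step1 : (∑ j1 ∈ Icc 1 (n₁ + h₁), ∑ j2 ∈ Icc 1 (n₂ + h₂),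
          star (a (j1 + b.1 - h₁) (j2 + b.2 - h₂)) * a (j1 + b'.1 - h₁) (j2 + b'.2 - h₂))
          = ∑ k1 ∈ Icc 1 n₁, ∑ j2 ∈ Icc 1 (n₂ + h₂),
              star (a (k1 + (b.1 - b'.1)) (j2 + b.2 - h₂)) * a k1 (j2 + b'.2 - h₂) :=
        shift_sum_pairB (fun x x' => ∑ j2 ∈ Icc 1 (n₂ + h₂),
            star (a x (j2 + b.2 - h₂)) * a x' (j2 + b'.2 - h₂)) n₁ h₁ b.1 b'.1
          hb1.2 hb1'.2 hc1.le
          (fun x x' hx => Finset.sum_eq_zero fun j2 _ => by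
            show star (a x (j2 + b.2 - h₂)) * a x' (j2 + b'.2 - h₂) = 0
            rw [haX x' _ hx, mul_zero])
      rw [step1]
      have hd1 : ¬ (0:ℤ) ≤ (b'.1 : ℤ) - b.1 := by omega
      have ht1 : (-((b'.1 : ℤ) - b.1)).toNat = b.1 - b'.1 := by omega
      rcases le_or_gt b.2 b'.2 with hc2 | hc2
      · rw [Finset.sum_congr rfl (fun k1 _ => hin2A hc2 (k1 + (b.1 - b'.1)) k1)]
        have hd2 : (0:ℤ) ≤ (b'.2 : ℤ) - b.2 := by omega
        have ht2 : ((b'.2 : ℤ) - b.2).toNat = b'.2 - b.2 := by omega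
        rw [hFdef]
        dsimp only
        rw [if_neg hd1, if_pos hd2, ht1, ht2]
      · rw [Finset.sum_congr rfl (fun k1 _ => hin2B hc2.le (k1 + (b.1 - b'.1)) k1)]
        have hd2 : ¬ (0:ℤ) ≤ (b'.2 : ℤ) - b.2 := by omega
        have ht2 : (-((b'.2 : ℤ) - b.2)).toNat = b.2 - b'.2 := by omega
        rw [hFdef]
        dsimp only
        rw [if_neg hd1, if_neg hd2, ht1, ht2]
  -- Step 5 : triangle + counting
  have hQbound : ‖∑ j ∈ J, star (Y j) * Y j‖ ≤
      (((h₁ : ℝ) + 1) * (((h₂ : ℝ) + 1) *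
        ∑ d1 ∈ Icc (-(h₁:ℤ)) h₁, ∑ d2 ∈ Icc (-(h₂:ℤ)) h₂, F d1 d2)) := by
    have h5a : ‖∑ j ∈ J, star (Y j) * Y j‖
        ≤ ∑ b ∈ B, ∑ b' ∈ B, F ((b'.1 : ℤ) - b.1) ((b'.2 : ℤ) - b.2) := by
      rw [hQ]
      calc ‖∑ b ∈ B, ∑ b' ∈ B, W b b'‖
          ≤ ∑ b ∈ B, ‖∑ b' ∈ B, W b b'‖ := norm_sum_le _ _
        _ ≤ ∑ b ∈ B, ∑ b' ∈ B, ‖W b b'‖ :=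
            Finset.sum_le_sum fun b _ => norm_sum_le _ _
        _ = ∑ b ∈ B, ∑ b' ∈ B, F ((b'.1 : ℤ) - b.1) ((b'.2 : ℤ) - b.2) :=
            Finset.sum_congr rfl fun b hb =>
              Finset.sum_congr rfl fun b' hb' => hW b hb b' hb'
    have h5b : ∑ b ∈ B, ∑ b' ∈ B, F ((b'.1 : ℤ) - b.1) ((b'.2 : ℤ) - b.2)
        = ∑ b1 ∈ Icc 0 h₁, ∑ b1' ∈ Icc 0 h₁, ∑ b2 ∈ Icc 0 h₂, ∑ b2' ∈ Icc 0 h₂,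
            F ((b1' : ℤ) - b1) ((b2' : ℤ) - b2) := by
      rw [hBdef]
      rw [Finset.sum_product]
      refine Finset.sum_congr rfl fun b1 _ => ?_
      calc ∑ b2 ∈ Icc 0 h₂, ∑ b' ∈ Icc 0 h₁ ×ˢ Icc 0 h₂,
            F ((b'.1 : ℤ) - b1) ((b'.2 : ℤ) - b2)
          = ∑ b2 ∈ Icc 0 h₂, ∑ b1' ∈ Icc 0 h₁, ∑ b2' ∈ Icc 0 h₂,
              F ((b1' : ℤ) - b1) ((b2' : ℤ) - b2) :=
            Finset.sum_congr rfl fun b2 _ => Finset.sum_product _ _ _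
        _ = ∑ b1' ∈ Icc 0 h₁, ∑ b2 ∈ Icc 0 h₂, ∑ b2' ∈ Icc 0 h₂,
              F ((b1' : ℤ) - b1) ((b2' : ℤ) - b2) := Finset.sum_comm
    exact (h5a.trans_eq h5b).trans (count2 F hFnonneg h₁ h₂)
  -- Step 6 : box evaluation
  have hbox : ∑ d1 ∈ Icc (-(h₁:ℤ)) h₁, ∑ d2 ∈ Icc (-(h₂:ℤ)) h₂, F d1 d2
      = T0 + 2 * (∑ e ∈ Icc 1 h₁, T1 e) + 2 * (∑ e ∈ Icc 1 h₂, T2 e)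
        + 2 * (∑ e1 ∈ Icc 1 h₁, ∑ e2 ∈ Icc 1 h₂, T3 e1 e2)
        + 2 * (∑ e1 ∈ Icc 1 h₁, ∑ e2 ∈ Icc 1 h₂, T4 e1 e2) := by
    have hstar2 : ∀ f g : ℕ → ℕ → A,
        ‖∑ k1 ∈ Icc 1 n₁, ∑ k2 ∈ Icc 1 n₂, star (f k1 k2) * g k1 k2‖
          = ‖∑ k1 ∈ Icc 1 n₁, ∑ k2 ∈ Icc 1 n₂, star (g k1 k2) * f k1 k2‖ :=
      fun f g => norm_star_double_sum _ _ f g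
    have hF00 : F 0 0 = T0 := by
      rw [hFdef, hT0def]; dsimp only
      rw [if_pos le_rfl, if_pos le_rfl]
      norm_num
    have hFp0 : ∀ e : ℕ, F (e : ℤ) 0 = T1 e := by
      intro e
      rw [hFdef, hT1def]; dsimp only
      rw [if_pos (by positivity), if_pos le_rfl]
      norm_num
    have hFm0 : ∀ e : ℕ, 1 ≤ e → F (-(e : ℤ)) 0 = T1 e := by
      intro e he
      rw [hFdef, hT1def]; dsimp only
      rw [if_neg (by omega), if_pos le_rfl]
      have h1 : (-(-(e:ℤ))).toNat = e := by omega
      rw [h1]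
      norm_num
      exact hstar2 (fun k1 k2 => a (k1 + e) k2) (fun k1 k2 => a k1 k2)
    have hF0p : ∀ e : ℕ, F 0 (e : ℤ) = T2 e := by
      intro e
      rw [hFdef, hT2def]; dsimp only
      rw [if_pos le_rfl, if_pos (by positivity)]
      norm_num
    have hF0m : ∀ e : ℕ, 1 ≤ e → F 0 (-(e : ℤ)) = T2 e := by
      intro e he
      rw [hFdef, hT2def]; dsimp only
      rw [if_pos le_rfl, if_neg (by omega)]
      have h1 : (-(-(e:ℤ))).toNat = e := by omega
      rw [h1]
      norm_num
      exact hstar2 (fun k1 k2 => a k1 (k2 + e)) (fun k1 k2 => a k1 k2)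
    have hFpp : ∀ e1 e2 : ℕ, F (e1 : ℤ) (e2 : ℤ) = T3 e1 e2 := by
      intro e1 e2
      rw [hFdef, hT3def]; dsimp only
      rw [if_pos (by positivity), if_pos (by positivity)]
      norm_num
    have hFmm : ∀ e1 e2 : ℕ, 1 ≤ e1 → 1 ≤ e2 → F (-(e1 : ℤ)) (-(e2 : ℤ)) = T3 e1 e2 := by
      intro e1 e2 he1 he2
      rw [hFdef, hT3def]; dsimp only
      rw [if_neg (by omega), if_neg (by omega)]
      have h1 : (-(-(e1:ℤ))).toNat = e1 := by omega
      have h2 : (-(-(e2:ℤ))).toNat = e2 := by omega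
      rw [h1, h2]
      exact hstar2 (fun k1 k2 => a (k1 + e1) (k2 + e2)) (fun k1 k2 => a k1 k2)
    have hFpm : ∀ e1 e2 : ℕ, 1 ≤ e2 → F (e1 : ℤ) (-(e2 : ℤ)) = T4 e1 e2 := by
      intro e1 e2 he2
      rw [hFdef, hT4def]; dsimp only
      rw [if_pos (by positivity), if_neg (by omega)]
      have h2 : (-(-(e2:ℤ))).toNat = e2 := by omega
      rw [h2]
      norm_num
      exact hstar2 (fun k1 k2 => a k1 (k2 + e2)) (fun k1 k2 => a (k1 + e1) k2)
    have hFmp : ∀ e1 e2 : ℕ, 1 ≤ e1 → F (-(e1 : ℤ)) (e2 : ℤ) = T4 e1 e2 := by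
      intro e1 e2 he1
      rw [hFdef, hT4def]; dsimp only
      rw [if_neg (by omega), if_pos (by positivity)]
      have h1 : (-(-(e1:ℤ))).toNat = e1 := by omega
      rw [h1]
      norm_num
    have hbox1 : ∑ d1 ∈ Icc (-(h₁:ℤ)) h₁, (∑ d2 ∈ Icc (-(h₂:ℤ)) h₂, F d1 d2)
        = (∑ e ∈ Icc 1 h₁, ∑ d2 ∈ Icc (-(h₂:ℤ)) h₂, F (-(e:ℤ)) d2)
          + (∑ d2 ∈ Icc (-(h₂:ℤ)) h₂, F 0 d2)
          + ∑ e ∈ Icc 1 h₁, ∑ d2 ∈ Icc (-(h₂:ℤ)) h₂, F (e:ℤ) d2 :=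
      box_decomp _ h₁
    have hGm : ∀ e1 ∈ Icc 1 h₁, (∑ d2 ∈ Icc (-(h₂:ℤ)) h₂, F (-(e1:ℤ)) d2)
        = ((∑ e2 ∈ Icc 1 h₂, T3 e1 e2) + T1 e1) + ∑ e2 ∈ Icc 1 h₂, T4 e1 e2 := by
      intro e1 he1
      have he1' : 1 ≤ e1 := (Finset.mem_Icc.mp he1).1
      rw [box_decomp (F (-(e1:ℤ))) h₂,
        Finset.sum_congr rfl (fun e2 he2 => hFmm e1 e2 he1' (Finset.mem_Icc.mp he2).1),
        hFm0 e1 he1',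
        Finset.sum_congr rfl (fun e2 _ => hFmp e1 e2 he1')]
    have hG0 : (∑ d2 ∈ Icc (-(h₂:ℤ)) h₂, F 0 d2)
        = ((∑ e2 ∈ Icc 1 h₂, T2 e2) + T0) + ∑ e2 ∈ Icc 1 h₂, T2 e2 := by
      rw [box_decomp (F 0) h₂,
        Finset.sum_congr rfl (fun e2 he2 => hF0m e2 (Finset.mem_Icc.mp he2).1),
        hF00, Finset.sum_congr rfl (fun e2 _ => hF0p e2)]
    have hGp : ∀ e1 ∈ Icc 1 h₁, (∑ d2 ∈ Icc (-(h₂:ℤ)) h₂, F (e1:ℤ) d2)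
        = ((∑ e2 ∈ Icc 1 h₂, T4 e1 e2) + T1 e1) + ∑ e2 ∈ Icc 1 h₂, T3 e1 e2 := by
      intro e1 he1
      rw [box_decomp (F (e1:ℤ)) h₂,
        Finset.sum_congr rfl (fun e2 he2 => hFpm e1 e2 (Finset.mem_Icc.mp he2).1),
        hFp0 e1, Finset.sum_congr rfl (fun e2 _ => hFpp e1 e2)]
    rw [hbox1, Finset.sum_congr rfl hGm, hG0, Finset.sum_congr rfl hGp,
      Finset.sum_add_distrib, Finset.sum_add_distrib,
      Finset.sum_add_distrib, Finset.sum_add_distrib]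
    ring
  -- Step 7 : conclusion
  have hrpos : (0:ℝ) < (n₁:ℝ) * (n₂:ℝ) := by
    have h1 : (1:ℝ) ≤ (n₁:ℝ) := by exact_mod_cast hn₁
    have h2 : (1:ℝ) ≤ (n₂:ℝ) := by exact_mod_cast hn₂
    nlinarith
  have hHrpos : (0:ℝ) < ((h₁:ℝ)+1)*((h₂:ℝ)+1) := by positivity
  have hT0n : 0 ≤ T0 := by rw [hT0def]; exact norm_nonneg _
  have hS1n : 0 ≤ ∑ e ∈ Icc 1 h₁, T1 e :=
    Finset.sum_nonneg fun e _ => by rw [hT1def]; exact norm_nonneg _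
  have hS2n : 0 ≤ ∑ e ∈ Icc 1 h₂, T2 e :=
    Finset.sum_nonneg fun e _ => by rw [hT2def]; exact norm_nonneg _
  have hS3n : 0 ≤ ∑ e1 ∈ Icc 1 h₁, ∑ e2 ∈ Icc 1 h₂, T3 e1 e2 :=
    Finset.sum_nonneg fun e1 _ => Finset.sum_nonneg fun e2 _ => by
      rw [hT3def]; exact norm_nonneg _
  have hS4n : 0 ≤ ∑ e1 ∈ Icc 1 h₁, ∑ e2 ∈ Icc 1 h₂, T4 e1 e2 :=
    Finset.sum_nonneg fun e1 _ => Finset.sum_nonneg fun e2 _ => by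
      rw [hT4def]; exact norm_nonneg _
  have hXn : 0 ≤ T0 + 2 * (∑ e ∈ Icc 1 h₁, T1 e) + 2 * (∑ e ∈ Icc 1 h₂, T2 e)
      + 2 * (∑ e1 ∈ Icc 1 h₁, ∑ e2 ∈ Icc 1 h₂, T3 e1 e2)
      + 2 * (∑ e1 ∈ Icc 1 h₁, ∑ e2 ∈ Icc 1 h₂, T4 e1 e2) := by linarith
  have hQnorm2 : ‖∑ j ∈ J, star (Y j) * Y j‖
      ≤ (((h₁:ℝ)+1)*((h₂:ℝ)+1)) * (T0 + 2 * (∑ e ∈ Icc 1 h₁, T1 e)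
        + 2 * (∑ e ∈ Icc 1 h₂, T2 e)
        + 2 * (∑ e1 ∈ Icc 1 h₁, ∑ e2 ∈ Icc 1 h₂, T3 e1 e2)
        + 2 * (∑ e1 ∈ Icc 1 h₁, ∑ e2 ∈ Icc 1 h₂, T4 e1 e2)) := by
    refine hQbound.trans ?_
    rw [hbox]
    apply le_of_eq
    ring
  have hnormsmul : ‖((h₁ + 1) * (h₂ + 1)) • S‖ = (((h₁:ℝ)+1)*((h₂:ℝ)+1)) * ‖S‖ := by
    rw [← Nat.cast_smul_eq_nsmul ℝ, norm_smul, Real.norm_natCast]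
    push_cast
    ring
  have c1 : ((((h₁:ℝ)+1)*((h₂:ℝ)+1)) * ‖S‖)^2
      ≤ (((n₁ + h₁) * (n₂ + h₂) : ℕ) : ℝ) * ((((h₁:ℝ)+1)*((h₂:ℝ)+1)) *
          (T0 + 2 * (∑ e ∈ Icc 1 h₁, T1 e) + 2 * (∑ e ∈ Icc 1 h₂, T2 e)
          + 2 * (∑ e1 ∈ Icc 1 h₁, ∑ e2 ∈ Icc 1 h₂, T3 e1 e2)
          + 2 * (∑ e1 ∈ Icc 1 h₁, ∑ e2 ∈ Icc 1 h₂, T4 e1 e2))) := by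
    rw [hrep] at hcs
    rw [← hnormsmul]
    exact hcs.trans (mul_le_mul_of_nonneg_left hQnorm2 (by positivity))
  have hN4 : (((n₁ + h₁) * (n₂ + h₂) : ℕ) : ℝ) ≤ 4 * ((n₁:ℝ) * (n₂:ℝ)) := by
    have c1' : (h₁:ℝ) ≤ (n₁:ℝ) := by exact_mod_cast hh₁
    have c2' : (h₂:ℝ) ≤ (n₂:ℝ) := by exact_mod_cast hh₂
    have c3' : (0:ℝ) ≤ (n₁:ℝ) := by positivity
    have c4' : (0:ℝ) ≤ (n₂:ℝ) := by positivity
    push_cast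
    nlinarith
  have key : ‖S‖^2 ≤ (4*((n₁:ℝ)*(n₂:ℝ))/(((h₁:ℝ)+1)*((h₂:ℝ)+1))) * T0
      + (8*((n₁:ℝ)*(n₂:ℝ))/(((h₁:ℝ)+1)*((h₂:ℝ)+1))) *
        ((∑ e ∈ Icc 1 h₁, T1 e) + (∑ e ∈ Icc 1 h₂, T2 e)
          + (∑ e1 ∈ Icc 1 h₁, ∑ e2 ∈ Icc 1 h₂, T3 e1 e2)
          + (∑ e1 ∈ Icc 1 h₁, ∑ e2 ∈ Icc 1 h₂, T4 e1 e2)) := by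
    rw [div_mul_eq_mul_div, div_mul_eq_mul_div, ← add_div, le_div_iff₀ hHrpos]
    nlinarith [c1, hN4, hXn, mul_le_mul_of_nonneg_right hN4 hXn,
      mul_pos hrpos hHrpos]
  have hsmul : ∀ X : A, ‖((n₁ * n₂ : ℂ))⁻¹ • X‖ = ((n₁:ℝ) * (n₂:ℝ))⁻¹ * ‖X‖ := by
    intro X
    rw [norm_smul, norm_inv, norm_mul, Complex.norm_natCast, Complex.norm_natCast]
  simp only [hT0def, hT1def, hT2def, hT3def, hT4def] at key
  simp only [hsmul, ← Finset.mul_sum]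
  exact final_algebra _ _ _ _ _ _ _ _ hrpos hHrpos key

end
end

section
/- Let a : ℕ^d → ℂ be bounded (sup_{k∈ℕ^d} |a(k)| < ∞) and suppose: (1) a has a correlation, and its spectral measure σ_a is discrete, i.e., there is a countable set D ⊆ 𝕋^d with σ_a(𝕋^d ∖ D) = 0; (2) the amplitude Γ_a(z) = lim_n (1/|n+1|) Σ_{k=0}^{n} a(k) conj(z)^k exists for every z ∈ 𝕋^d; (3) σ_a({z}) = |Γ_a(z)|² for every z ∈ 𝕋^d. Then a is Besicovitch: for every ε > 0 there exists a trigonometric polynomial P with limsup_n (1/|n+1|) Σ_{k=0}^{n} |a(k) − P(k)| < ε. -/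
open MeasureTheory Filter
open scoped Topology ComplexConjugate

noncomputable section

/-- `z ^ m = z₁^{m₁} ⋯ z_d^{m_d}` for `z ∈ 𝕋^d` and `m ∈ ℤ^d`. -/
def zpowM {d : ℕ} (z : Torus d) (m : Fin d → ℤ) : ℂ := ∏ j, (z.1 j) ^ (m j)

/-- `|n+1| = (n₁+1) ⋯ (n_d+1)`. -/
def boxVol {d : ℕ} (n : Fin d → ℕ) : ℝ := ∏ j, ((n j : ℝ) + 1)

/-- The extension of a weight sequence `a : ℕ^d → ℂ` to `ℤ^d`, by `0` off `ℕ^d`. -/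
def extZ {d : ℕ} (a : (Fin d → ℕ) → ℂ) (k : Fin d → ℤ) : ℂ :=
  if ∀ j, 0 ≤ k j then a fun j => (k j).toNat else 0

/-- `a` has correlation `γ`. -/
def HasCorrelation {d : ℕ} (a : (Fin d → ℕ) → ℂ) (γ : (Fin d → ℤ) → ℂ) : Prop :=
  ∀ m : Fin d → ℤ,
    Tendsto
      (fun n : Fin d → ℕ =>
        ((boxVol n : ℝ) : ℂ)⁻¹ *
          ∑ k ∈ Finset.Icc (fun j => -(n j : ℤ)) (fun j => (n j : ℤ)),
            conj (extZ a k) * extZ a (k + m))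
      atTop (𝓝 (γ m))

/-- `σ` is a spectral measure for `γ` : `∫_{𝕋^d} z^m dσ(z) = γ m` for all `m ∈ ℤ^d`. -/
def IsSpectralMeasure {d : ℕ} (γ : (Fin d → ℤ) → ℂ) (σ : Measure (Torus d)) : Prop :=
  ∀ m : Fin d → ℤ, ∫ z, zpowM z m ∂σ = γ m

/-- A trigonometric polynomial: a finite linear combination of the characters
`k ↦ z^k` with `z ∈ 𝕋^d`. -/
def IsTrigPoly {d : ℕ} (P : (Fin d → ℕ) → ℂ) : Prop :=
  ∃ (r : ℕ) (c : Fin r → ℂ) (z : Fin r → Torus d),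
    ∀ k : Fin d → ℕ, P k = ∑ α, c α * zpowM (z α) fun j => (k j : ℤ)

lemma eval_tendsto_atTop {d : ℕ} (j : Fin d) :
    Tendsto (fun n : Fin d → ℕ => n j) atTop atTop := by
  refine tendsto_atTop_atTop.2 fun b => ⟨fun _ => b, fun n hn => hn j⟩

lemma boxVol_pos {d : ℕ} (n : Fin d → ℕ) : 0 < boxVol n := by
  refine Finset.prod_pos fun j _ => by positivity

lemma geom_avg_norm_tendsto_zero {w : ℂ} (hw : ‖w‖ = 1) (hw1 : w ≠ 1) :
    Tendsto (fun m : ℕ => ‖(((m : ℝ) + 1 : ℝ) : ℂ)⁻¹ * ∑ t ∈ Finset.range (m + 1), w ^ t‖)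
      atTop (𝓝 0) := by
  have hKpos : (0:ℝ) < ‖w - 1‖ := by
    rw [norm_pos_iff]
    exact sub_ne_zero.mpr hw1
  have hbound : ∀ m : ℕ, ‖∑ t ∈ Finset.range (m + 1), w ^ t‖ ≤ (1 + ‖w‖^(m+1)) / ‖w - 1‖ := by
    intro m
    rw [geom_sum_eq hw1]
    rw [norm_div]
    have : ‖w - (1:ℂ)‖ = ‖w - 1‖ := rfl
    rw [this]
    gcongr
    calc ‖w ^ (m+1) - 1‖ ≤ ‖w ^ (m+1)‖ + ‖(1:ℂ)‖ := norm_sub_le _ _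
    _ = ‖w‖^(m+1) + 1 := by rw [norm_pow, norm_one]
    _ = 1 + ‖w‖^(m+1) := by ring
  have hwnorm : ∀ m:ℕ, ‖∑ t ∈ Finset.range (m + 1), w ^ t‖ ≤ 2 / ‖w - 1‖ := by
    intro m
    refine (hbound m).trans ?_
    rw [hw, one_pow]
    norm_num
  have hg : Tendsto (fun m : ℕ => ((m : ℝ) + 1)⁻¹ * (2 / ‖w - 1‖)) atTop (𝓝 0) := by
    have h1 : Tendsto (fun m : ℕ => ((m : ℝ) + 1)) atTop atTop :=
      tendsto_atTop_add_const_right _ 1 tendsto_natCast_atTop_atTop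
    simpa using h1.inv_tendsto_atTop.mul_const (2 / ‖w - 1‖)
  refine squeeze_zero (fun m => norm_nonneg _) (fun m => ?_) hg
  rw [norm_mul, norm_inv, Complex.norm_real, Real.norm_eq_abs, abs_of_pos (by positivity)]
  exact mul_le_mul_of_nonneg_left (hwnorm m) (by positivity)



lemma Icc_zero_eq_range (m : ℕ) : Finset.Icc 0 m = Finset.range (m+1) := by
  ext x; simp [Nat.lt_succ_iff]

lemma avg_factor {d : ℕ} (w : Fin d → ℂ) (n : Fin d → ℕ) :
    ((boxVol n : ℝ) : ℂ)⁻¹ * ∑ k ∈ Finset.Icc 0 n, ∏ j, (w j) ^ (k j)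
      = ∏ j, ((((n j : ℝ) + 1 : ℝ)) : ℂ)⁻¹ * ∑ t ∈ Finset.range (n j + 1), (w j) ^ t := by
  have h1 : Finset.Icc (0 : Fin d → ℕ) n = Fintype.piFinset fun j => Finset.range (n j + 1) := by
    rw [Pi.Icc_eq]
    congr 1
    funext j
    exact Icc_zero_eq_range (n j)
  rw [h1, ← Finset.prod_univ_sum, Finset.prod_mul_distrib]
  congr 1
  rw [boxVol, Complex.ofReal_prod]
  exact (Finset.prod_inv_distrib _).symm

lemma char_avg_one {d : ℕ} (w : Fin d → ℂ) (hw : ∀ j, w j = 1) (n : Fin d → ℕ) :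
    ((boxVol n : ℝ) : ℂ)⁻¹ * ∑ k ∈ Finset.Icc 0 n, ∏ j, (w j) ^ (k j) = 1 := by
  rw [avg_factor]
  refine Finset.prod_eq_one fun j _ => ?_
  rw [hw j]
  simp only [one_pow, Finset.sum_const, Finset.card_range, nsmul_eq_mul, mul_one]
  have hne : ((((n j : ℝ) + 1 : ℝ)) : ℂ) ≠ 0 := by
    push_cast
    exact Nat.cast_add_one_ne_zero (n j)
  rw [inv_mul_eq_one₀ hne]
  push_cast
  ring

lemma factor_norm_le_one {w : ℂ} (hw : ‖w‖ = 1) (m : ℕ) :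
    ‖(((m:ℝ)+1:ℝ):ℂ)⁻¹ * ∑ t ∈ Finset.range (m+1), w ^ t‖ ≤ 1 := by
  rw [norm_mul, norm_inv, Complex.norm_real, Real.norm_eq_abs, abs_of_pos (by positivity)]
  have h1 : ‖∑ t ∈ Finset.range (m+1), w ^ t‖ ≤ (m:ℝ)+1 := by
    refine (norm_sum_le _ _).trans ?_
    simp only [norm_pow, hw, one_pow, Finset.sum_const, Finset.card_range, nsmul_eq_mul, mul_one]
    push_cast
    exact le_refl _
  calc ((m:ℝ)+1)⁻¹ * ‖∑ t ∈ Finset.range (m+1), w ^ t‖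
      ≤ ((m:ℝ)+1)⁻¹ * ((m:ℝ)+1) := mul_le_mul_of_nonneg_left h1 (by positivity)
  _ = 1 := inv_mul_cancel₀ (by positivity)

lemma char_avg_zero {d : ℕ} (w : Fin d → ℂ) (hw : ∀ j, ‖w j‖ = 1) {j0 : Fin d} (hj0 : w j0 ≠ 1) :
    Tendsto (fun n : Fin d → ℕ =>
        ((boxVol n : ℝ) : ℂ)⁻¹ * ∑ k ∈ Finset.Icc 0 n, ∏ j, (w j) ^ (k j))
      atTop (𝓝 0) := by
  rw [tendsto_zero_iff_norm_tendsto_zero]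
  refine squeeze_zero (fun n => norm_nonneg _) (fun n => ?_)
    ((geom_avg_norm_tendsto_zero (hw j0) hj0).comp (eval_tendsto_atTop j0))
  rw [avg_factor, norm_prod, ← Finset.mul_prod_erase Finset.univ _ (Finset.mem_univ j0)]
  refine mul_le_of_le_one_right (norm_nonneg _) ?_
  exact Finset.prod_le_one (fun j _ => norm_nonneg _) (fun j _ => factor_norm_le_one (hw j) (n j))



lemma sum_extZ_eq {d : ℕ} (a : (Fin d → ℕ) → ℂ) (n : Fin d → ℕ) :
    ∑ k ∈ Finset.Icc (fun j => -(n j : ℤ)) (fun j => (n j : ℤ)),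
        conj (extZ a k) * extZ a (k + 0)
      = ∑ k ∈ Finset.Icc 0 n, conj (a k) * a k := by
  have hsub : Finset.Icc (0 : Fin d → ℤ) (fun j => (n j : ℤ))
      ⊆ Finset.Icc (fun j => -(n j : ℤ)) (fun j => (n j : ℤ)) := by
    refine Finset.Icc_subset_Icc ?_ le_rfl
    intro j
    exact neg_nonpos.mpr (Int.natCast_nonneg _)
  rw [← Finset.sum_subset hsub ?_]
  · refine Finset.sum_nbij' (i := fun (k : Fin d → ℤ) (j : Fin d) => (k j).toNat)
      (j := fun (k : Fin d → ℕ) (j : Fin d) => ((k j : ℤ))) ?_ ?_ ?_ ?_ ?_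
    · intro k hk
      rw [Finset.mem_Icc] at hk ⊢
      obtain ⟨h0, h1⟩ := hk
      constructor
      · intro j; exact Nat.zero_le _
      · intro j; exact Int.toNat_le.mpr (h1 j)
    · intro k hk
      rw [Finset.mem_Icc] at hk ⊢
      obtain ⟨h0, h1⟩ := hk
      constructor
      · intro j; exact Int.natCast_nonneg _
      · intro j
        simpa using Int.ofNat_le.mpr (h1 j)
    · intro k hk
      rw [Finset.mem_Icc] at hk
      funext j
      exact Int.toNat_of_nonneg (hk.1 j)
    · intro k hk
      funext j
      exact Int.toNat_natCast _
    · intro k hk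
      rw [Finset.mem_Icc] at hk
      have h0 : ∀ j, (0:ℤ) ≤ k j := fun j => hk.1 j
      simp only [add_zero, extZ, h0, if_true, forall_true_iff, if_pos trivial]
  · intro k hk hknot
    rw [Finset.mem_Icc] at hk hknot
    have : ¬ (0 : Fin d → ℤ) ≤ k := fun h0 => hknot ⟨h0, hk.2⟩
    have h2 : ¬ ∀ j, 0 ≤ k j := by
      intro h
      exact this (fun j => h j)
    rw [extZ, if_neg h2, map_zero, zero_mul]


/-- conversely, a bounded sequence `a` which has a correlation with a
discrete spectral measure, whose amplitude `Γ_a(z)` exists for every `z ∈ 𝕋^d`, and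
with `σ_a {z} = |Γ_a(z)|²` for all `z`, is Besicovitch: for every `ε > 0` there is a
trigonometric polynomial `P` with `limsup_n (1/|n+1|) ∑_{k=0}^{n} |a k − P k| < ε`. -/
theorem statement12 {d : ℕ} (hd : 1 ≤ d) (a : (Fin d → ℕ) → ℂ)
    (hbdd : ∃ C : ℝ, ∀ k, ‖a k‖ ≤ C)
    (γ : (Fin d → ℤ) → ℂ) (σ : Measure (Torus d)) (Γ : Torus d → ℂ)
    (hγ : HasCorrelation a γ) (hfin : IsFiniteMeasure σ) (hσ : IsSpectralMeasure γ σ)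
    (hdisc : ∃ D : Set (Torus d), D.Countable ∧ σ Dᶜ = 0)
    (hΓ : ∀ z : Torus d,
      Tendsto
        (fun n : Fin d → ℕ =>
          ((boxVol n : ℝ) : ℂ)⁻¹ *
            ∑ k ∈ Finset.Icc 0 n, a k * conj (zpowM z fun j => (k j : ℤ)))
        atTop (𝓝 (Γ z)))
    (hpoint : ∀ z : Torus d, σ {z} = ENNReal.ofReal (‖Γ z‖ ^ 2)) :
    ∀ ε : ℝ, 0 < ε → ∃ P : (Fin d → ℕ) → ℂ, IsTrigPoly P ∧
      Filter.limsup
          (fun n : Fin d → ℕ =>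
            (boxVol n)⁻¹ * ∑ k ∈ Finset.Icc 0 n, ‖a k - P k‖)
          atTop < ε := by
  classical
  haveI := hfin
  intro ε hε
  obtain ⟨D, hDc, hDnull⟩ := hdisc
  set M : ENNReal := σ Set.univ with hMdef
  set εE : ENNReal := ENNReal.ofReal (ε ^ 2 / 2) with hεEdef
  have hεE0 : εE ≠ 0 := by
    simp only [hεEdef, ne_eq, ENNReal.ofReal_eq_zero, not_le]
    positivity
  -- Step 1: select finitely many atoms capturing most of the mass
  have hsel : ∃ t : Finset (Torus d), M ≤ (∑ z ∈ t, σ {z}) + εE := by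
    by_cases hM0 : M = 0
    · exact ⟨∅, by simp [hM0]⟩
    · have hcover : M ≤ ∑' z : D, σ {(z : Torus d)} := by
        calc M = σ (D ∪ Dᶜ) := by rw [Set.union_compl_self]
        _ ≤ σ D + σ Dᶜ := measure_union_le _ _
        _ = σ D := by rw [hDnull, add_zero]
        _ = σ (⋃ z ∈ D, {z}) := by rw [Set.biUnion_of_singleton]
        _ ≤ ∑' z : D, σ {(z : Torus d)} := measure_biUnion_le σ hDc _
      have hlt : M - εE < ⨆ s : Finset D, ∑ z ∈ s, σ {(z : Torus d)} := by
        refine lt_of_lt_of_le ?_ (hcover.trans_eq ENNReal.tsum_eq_iSup_sum)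
        exact ENNReal.sub_lt_self (measure_ne_top σ _) hM0 hεE0
      obtain ⟨s, hs⟩ := lt_iSup_iff.mp hlt
      refine ⟨s.image Subtype.val, ?_⟩
      have himg : ∑ z ∈ s.image Subtype.val, σ {z} = ∑ z ∈ s, σ {(z : Torus d)} :=
        Finset.sum_image (fun x _ y _ h => Subtype.ext h)
      rw [himg]
      exact tsub_le_iff_right.mp hs.le
  obtain ⟨t, ht⟩ := hsel
  -- Step 2: define the trigonometric polynomial
  set r : ℕ := t.card with hrdef
  set zf : Fin r → Torus d := fun α => ((t.equivFin.symm α : ↥t) : Torus d) with hzfdef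
  have hzf_inj : Function.Injective zf :=
    Subtype.coe_injective.comp t.equivFin.symm.injective
  set c : Fin r → ℂ := fun α => Γ (zf α) with hcdef
  set zp : Fin r → (Fin d → ℕ) → ℂ :=
    fun α k => zpowM (zf α) (fun j => (k j : ℤ)) with hzpdef
  set P : (Fin d → ℕ) → ℂ := fun k => ∑ α, c α * zp α k with hPdef
  refine ⟨P, ⟨r, c, zf, fun k => rfl⟩, ?_⟩
  -- the limits
  set V : Fin r → (Fin d → ℕ) → ℂ :=
    fun α n => ((boxVol n : ℝ) : ℂ)⁻¹ * ∑ k ∈ Finset.Icc 0 n, a k * conj (zp α k) with hVdef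
  have hV : ∀ α, Tendsto (V α) atTop (𝓝 (c α)) := fun α => hΓ (zf α)
  set wv : Fin r → Fin r → Fin d → ℂ :=
    fun α β j => conj ((zf α).1 j) * (zf β).1 j with hwvdef
  have hwv_norm : ∀ α β j, ‖wv α β j‖ = 1 := by
    intro α β j
    rw [hwvdef]
    simp only [norm_mul, RCLike.norm_conj]
    rw [(zf α).2 j, (zf β).2 j, mul_one]
  have hzp_prod : ∀ α β (k : Fin d → ℕ),
      conj (zp α k) * zp β k = ∏ j, (wv α β j) ^ (k j) := by
    intro α β k
    rw [hzpdef]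
    simp only [zpowM, map_prod, ← Finset.prod_mul_distrib]
    refine Finset.prod_congr rfl fun j _ => ?_
    rw [map_zpow₀, zpow_natCast, zpow_natCast, ← mul_pow]
  set W : Fin r → Fin r → (Fin d → ℕ) → ℂ :=
    fun α β n => ((boxVol n : ℝ) : ℂ)⁻¹ * ∑ k ∈ Finset.Icc 0 n, ∏ j, (wv α β j) ^ (k j)
    with hWdef
  have hconjz : ∀ (x : ℂ), ‖x‖ = 1 → conj x * x = 1 := by
    intro x hx
    rw [mul_comm, Complex.mul_conj, Complex.normSq_eq_norm_sq, hx]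
    norm_num
  have hW : ∀ α β, Tendsto (W α β) atTop (𝓝 (if α = β then 1 else 0)) := by
    intro α β
    by_cases hab : α = β
    · subst hab
      rw [if_pos rfl]
      have hone : ∀ j, wv α α j = 1 := fun j => hconjz _ ((zf α).2 j)
      have : ∀ n, W α α n = 1 := fun n => char_avg_one _ hone n
      exact Tendsto.congr (fun n => (this n).symm) tendsto_const_nhds
    · rw [if_neg hab]
      have hzne : zf α ≠ zf β := fun h => hab (hzf_inj h)
      have hexj : ∃ j, (zf α).1 j ≠ (zf β).1 j := by
        by_contra hcon
        push_neg at hcon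
        exact hzne (Subtype.ext (funext hcon))
      obtain ⟨j0, hj0⟩ := hexj
      refine char_avg_zero _ (hwv_norm α β) (j0 := j0) ?_
      intro hcon
      apply hj0
      have h2 := congrArg (fun x => (zf α).1 j0 * x) hcon
      simp only [mul_one] at h2
      rw [← mul_assoc, Complex.mul_conj, Complex.normSq_eq_norm_sq, (zf α).2 j0] at h2
      norm_num at h2
      exact h2.symm
  -- A-term
  set A : (Fin d → ℕ) → ℂ :=
    fun n => ((boxVol n : ℝ) : ℂ)⁻¹ * ∑ k ∈ Finset.Icc 0 n, conj (a k) * a k with hAdef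
  have hA : Tendsto A atTop (𝓝 (γ 0)) :=
    (hγ 0).congr (fun n => by rw [sum_extZ_eq])
  have hconjV : ∀ α n, conj (V α n)
      = ((boxVol n : ℝ) : ℂ)⁻¹ * ∑ k ∈ Finset.Icc 0 n, conj (a k * conj (zp α k)) := by
    intro α n
    rw [hVdef]
    rw [map_mul, map_inv₀, Complex.conj_ofReal, map_sum]
  -- the key algebraic identity
  have key : ∀ n : Fin d → ℕ,
      ((boxVol n : ℝ) : ℂ)⁻¹ * ∑ k ∈ Finset.Icc 0 n, conj (a k - P k) * (a k - P k)
        = A n - (∑ α, conj (c α) * V α n) - (∑ α, c α * conj (V α n))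
          + (∑ α, ∑ β, (conj (c α) * c β) * W α β n) := by
    intro n
    have hk1 : ∀ k : Fin d → ℕ, conj (a k - P k) * (a k - P k)
        = conj (a k) * a k
          - (∑ α, conj (c α) * (a k * conj (zp α k)))
          - (∑ α, c α * conj (a k * conj (zp α k)))
          + (∑ α, ∑ β, (conj (c α) * c β) * (conj (zp α k) * zp β k)) := by
      intro k
      have e1 : conj (P k) * a k = ∑ α, conj (c α) * (a k * conj (zp α k)) := by
        rw [hPdef, map_sum, Finset.sum_mul]
        refine Finset.sum_congr rfl fun α _ => ?_
        rw [map_mul]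
        ring
      have e2 : conj (a k) * P k = ∑ α, c α * conj (a k * conj (zp α k)) := by
        rw [hPdef, Finset.mul_sum]
        refine Finset.sum_congr rfl fun α _ => ?_
        rw [map_mul, Complex.conj_conj]
        ring
      have e3 : conj (P k) * P k
          = ∑ α, ∑ β, (conj (c α) * c β) * (conj (zp α k) * zp β k) := by
        rw [hPdef, map_sum, Finset.sum_mul_sum]
        refine Finset.sum_congr rfl fun α _ => Finset.sum_congr rfl fun β _ => ?_
        rw [map_mul]
        ring
      calc conj (a k - P k) * (a k - P k)
          = conj (a k) * a k - conj (P k) * a k - conj (a k) * P k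
            + conj (P k) * P k := by rw [map_sub]; ring
      _ = _ := by rw [e1, e2, e3]
    rw [Finset.sum_congr rfl fun k _ => hk1 k]
    simp only [Finset.sum_add_distrib, Finset.sum_sub_distrib]
    rw [mul_add, mul_sub, mul_sub]
    congr 1
    · congr 1
      · congr 1
        · rw [Finset.sum_comm, Finset.mul_sum]
          refine Finset.sum_congr rfl fun α _ => ?_
          rw [← Finset.mul_sum]
          ring
      · rw [Finset.sum_comm, Finset.mul_sum]
        refine Finset.sum_congr rfl fun α _ => ?_
        rw [hconjV α n, ← Finset.mul_sum]
        ring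
    · rw [Finset.sum_comm, Finset.mul_sum]
      refine Finset.sum_congr rfl fun α _ => ?_
      rw [Finset.sum_comm, Finset.mul_sum]
      refine Finset.sum_congr rfl fun β _ => ?_
      rw [hWdef]
      simp only
      rw [Finset.sum_congr rfl fun k _ => (hzp_prod α β k).symm, ← Finset.mul_sum]
      ring
  -- convergence of the averaged square deviation
  have hB : Tendsto (fun n => ∑ α, conj (c α) * V α n) atTop
      (𝓝 (∑ α, conj (c α) * c α)) :=
    tendsto_finset_sum _ (fun α _ => (hV α).const_mul _)
  have hC : Tendsto (fun n => ∑ α, c α * conj (V α n)) atTop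
      (𝓝 (∑ α, c α * conj (c α))) := by
    refine tendsto_finset_sum _ (fun α _ => ?_)
    exact (((Complex.continuous_conj.tendsto _).comp (hV α)).const_mul _)
  have hDD : Tendsto (fun n => ∑ α, ∑ β, (conj (c α) * c β) * W α β n) atTop
      (𝓝 (∑ α, ∑ β, (conj (c α) * c β) * (if α = β then 1 else 0))) :=
    tendsto_finset_sum _ (fun α _ =>
      tendsto_finset_sum _ (fun β _ => (hW α β).const_mul _))
  have hU : Tendsto
      (fun n : Fin d → ℕ =>
        ((boxVol n : ℝ) : ℂ)⁻¹ * ∑ k ∈ Finset.Icc 0 n, conj (a k - P k) * (a k - P k))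
      atTop (𝓝 (γ 0 - ∑ α, conj (c α) * c α)) := by
    have h3 : (∑ α, c α * conj (c α)) = ∑ α, conj (c α) * c α :=
      Finset.sum_congr rfl fun α _ => mul_comm _ _
    have h4 : (∑ α, ∑ β, (conj (c α) * c β) * (if α = β then 1 else 0))
        = ∑ α, conj (c α) * c α := by
      refine Finset.sum_congr rfl fun α _ => ?_
      simp [mul_ite, mul_one, mul_zero, Finset.sum_ite_eq]
    have := ((hA.sub hB).sub hC).add hDD
    rw [h3, h4] at this
    have h5 : γ 0 - (∑ α, conj (c α) * c α) - (∑ α, conj (c α) * c α)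
        + (∑ α, conj (c α) * c α) = γ 0 - ∑ α, conj (c α) * c α := by ring
    rw [h5] at this
    exact Tendsto.congr (fun n => (key n).symm) this
  -- pass to real values
  set S : (Fin d → ℕ) → ℝ :=
    fun n => (boxVol n)⁻¹ * ∑ k ∈ Finset.Icc 0 n, ‖a k - P k‖ ^ 2 with hSdef
  have hUS : ∀ n, ((boxVol n : ℝ) : ℂ)⁻¹ *
      ∑ k ∈ Finset.Icc 0 n, conj (a k - P k) * (a k - P k) = ((S n : ℝ) : ℂ) := by
    intro n
    simp only [hSdef]
    push_cast
    congr 1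
    refine Finset.sum_congr rfl fun k _ => ?_
    rw [mul_comm, Complex.mul_conj]
    norm_cast
    rw [Complex.sq_norm]
  have hγ0 : γ 0 = ((M.toReal : ℝ) : ℂ) := by
    rw [← hσ 0]
    have h1 : ∀ z : Torus d, zpowM z 0 = 1 := fun z => by simp [zpowM]
    simp only [h1]
    rw [integral_const]
    simp
    rfl
  have hsum_c : (∑ α, conj (c α) * c α) = (((∑ α, ‖c α‖ ^ 2 : ℝ)) : ℂ) := by
    push_cast
    refine Finset.sum_congr rfl fun α _ => ?_
    rw [mul_comm, Complex.mul_conj]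
    norm_cast
    rw [Complex.sq_norm]
  set Sr : ℝ := M.toReal - ∑ α, ‖c α‖ ^ 2 with hSrdef
  have hS : Tendsto S atTop (𝓝 Sr) := by
    have h6 : Tendsto (fun n => ((S n : ℝ) : ℂ)) atTop
        (𝓝 (γ 0 - ∑ α, conj (c α) * c α)) := Tendsto.congr (fun n => hUS n) hU
    rw [hγ0, hsum_c, ← Complex.ofReal_sub] at h6
    have h7 := (Complex.continuous_re.tendsto _).comp h6
    simpa only [Function.comp_def, Complex.ofReal_re] using h7
  -- bound on Sr
  have hcα : ∀ α, ‖c α‖ ^ 2 = (σ {zf α}).toReal := by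
    intro α
    rw [hcdef]
    simp only
    rw [hpoint (zf α), ENNReal.toReal_ofReal (by positivity)]
  have hsum_t : ∑ α, (σ {zf α}).toReal = ∑ w ∈ t, (σ {w}).toReal := by
    rw [← Finset.sum_coe_sort t (fun w => (σ {w}).toReal)]
    exact Equiv.sum_comp t.equivFin.symm (fun x : ↥t => (σ {(x : Torus d)}).toReal)
  have hSr_le : Sr ≤ ε ^ 2 / 2 := by
    have hfin_sum : ∀ w ∈ t, σ {w} ≠ ⊤ := fun w _ => measure_ne_top σ _
    have hsne : (∑ w ∈ t, σ {w}) ≠ ⊤ := by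
      refine (ENNReal.sum_lt_top.mpr fun w hw => ?_).ne
      exact (measure_lt_top σ _)
    have hne : (∑ w ∈ t, σ {w}) + εE ≠ ⊤ :=
      ENNReal.add_ne_top.mpr ⟨hsne, ENNReal.ofReal_ne_top⟩
    have h8 := ENNReal.toReal_mono hne ht
    rw [hεEdef] at h8
    rw [ENNReal.toReal_add hsne ENNReal.ofReal_ne_top, ENNReal.toReal_sum hfin_sum,
      ENNReal.toReal_ofReal (by positivity)] at h8
    have h9 : ∑ α, ‖c α‖ ^ 2 = ∑ w ∈ t, (σ {w}).toReal := by
      rw [Finset.sum_congr rfl fun α _ => hcα α]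
      exact hsum_t
    rw [hSrdef, h9]
    linarith
  -- conclusion
  set b : ℝ := 3 / 4 * ε with hbdef
  have hb : 0 < b := by rw [hbdef]; positivity
  have hbε : b < ε := by rw [hbdef]; linarith
  have hSrb : Sr < b ^ 2 := by
    rw [hbdef]
    nlinarith [hSr_le, hε]
  have hev : ∀ᶠ n in atTop, S n < b ^ 2 := hS.eventually_lt_const hSrb
  have hfS : ∀ n : Fin d → ℕ,
      (boxVol n)⁻¹ * ∑ k ∈ Finset.Icc 0 n, ‖a k - P k‖ ≤ Real.sqrt (S n) := by
    intro n
    have hbv := boxVol_pos n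
    have hcard : ((Finset.Icc (0 : Fin d → ℕ) n).card : ℝ) = boxVol n := by
      rw [Pi.card_Icc, boxVol, Nat.cast_prod]
      refine Finset.prod_congr rfl fun j _ => ?_
      rw [Nat.card_Icc]
      simp only [Pi.zero_apply, Nat.sub_zero]
      push_cast
      ring
    have hnn : (0:ℝ) ≤ ∑ k ∈ Finset.Icc 0 n, ‖a k - P k‖ :=
      Finset.sum_nonneg fun k _ => norm_nonneg _
    have hSnn : 0 ≤ S n := by
      simp only [hSdef]
      exact mul_nonneg (inv_nonneg.mpr hbv.le)
        (Finset.sum_nonneg fun k _ => sq_nonneg _)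
    have hq : ((boxVol n)⁻¹ * ∑ k ∈ Finset.Icc 0 n, ‖a k - P k‖) ^ 2 ≤ S n := by
      have hcs := Finset.sum_mul_sq_le_sq_mul_sq (Finset.Icc 0 n) (fun _ => (1:ℝ))
        (fun k => ‖a k - P k‖)
      simp only [one_mul, one_pow, Finset.sum_const, nsmul_eq_mul, mul_one] at hcs
      simp only [hSdef]
      rw [mul_pow]
      calc (boxVol n)⁻¹ ^ 2 * (∑ k ∈ Finset.Icc 0 n, ‖a k - P k‖) ^ 2
          ≤ (boxVol n)⁻¹ ^ 2 * (((Finset.Icc (0 : Fin d → ℕ) n).card : ℝ)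
            * ∑ k ∈ Finset.Icc 0 n, ‖a k - P k‖ ^ 2) :=
            mul_le_mul_of_nonneg_left hcs (by positivity)
      _ = (boxVol n)⁻¹ * ∑ k ∈ Finset.Icc 0 n, ‖a k - P k‖ ^ 2 := by
            rw [hcard]
            field_simp
    exact (Real.le_sqrt (mul_nonneg (inv_nonneg.mpr hbv.le) hnn) hSnn).mpr hq
  have hev2 : ∀ᶠ n in atTop,
      (boxVol n)⁻¹ * ∑ k ∈ Finset.Icc 0 n, ‖a k - P k‖ ≤ b := by
    filter_upwards [hev] with n hn
    exact (hfS n).trans ((Real.sqrt_lt' hb).mpr hn).le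
  have hnn0 : ∀ n : Fin d → ℕ,
      (0:ℝ) ≤ (boxVol n)⁻¹ * ∑ k ∈ Finset.Icc 0 n, ‖a k - P k‖ := fun n =>
    mul_nonneg (inv_nonneg.mpr (boxVol_pos n).le)
      (Finset.sum_nonneg fun k _ => norm_nonneg _)
  exact lt_of_le_of_lt
    (Filter.limsup_le_of_le (isCoboundedUnder_le_of_le atTop hnn0) hev2) hbε


end
end
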